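/- arXiv:2404.16722 — 4 statements merged into one kernel-verified Lean document; each statement's English description precedes it below -/
import Mathlib

section
/- Let k, b, c be natural numbers with b ≤ c ≤ k. The number of graphs H on the labeled vertex set [k] that have a vertex cover of size at most b and satisfy |V(E(H))| ≤ c is at most 2^{c·log₂ k + b·(c − (b+1)/2)}, and in particular at most 2^{c·(b + log₂ k)}. -/
open Finset
open scoped Classical

namespace CliqueSA

variable {k : ℕ}

/-- `C` is a vertex cover of the graph `H` on `[k]`. -/
def IsVC (H : SimpleGraph (Fin k)) (C : Finset (Fin k)) : Prop :=
  ∀ ⦃u v : Fin k⦄, H.Adj u v → u ∈ C ∨ v ∈ C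

/-- Minimum vertex cover size of a graph on `[k]`. -/
noncomputable def vc (H : SimpleGraph (Fin k)) : ℕ :=
  sInf {m | ∃ C : Finset (Fin k), IsVC H C ∧ C.card = m}

/-- The edges of a graph on `[k]` as a `Finset`. -/
noncomputable def edgeF (H : SimpleGraph (Fin k)) : Finset (Sym2 (Fin k)) :=
  Finset.univ.filter (fun e => e ∈ H.edgeSet)

/-- Restriction of `H` to the vertex subset `B` (vertex-induced subgraph, on the vertex set `[k]`). -/
def restrict (H : SimpleGraph (Fin k)) (B : Finset (Fin k)) : SimpleGraph (Fin k) where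
  Adj u v := H.Adj u v ∧ u ∈ B ∧ v ∈ B
  symm := ⟨by intro u v h; exact ⟨h.1.symm, h.2.2, h.2.1⟩⟩
  loopless := ⟨by intro u h; exact H.loopless.irrefl u h.1⟩

/-- The non-isolated vertices `V(E(H))` of a graph on `[k]`. -/
noncomputable def suppF (H : SimpleGraph (Fin k)) : Finset (Fin k) :=
  Finset.univ.filter (fun v => v ∈ H.support)

/-- `W` is a minimum vertex cover of `H`. -/
def IsMinVC (H : SimpleGraph (Fin k)) (W : Finset (Fin k)) : Prop :=
  IsVC H W ∧ W.card = vc H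

/-- There is a matching in `H` from `U` into `W` covering all of `U`. -/
def MatchableInto (H : SimpleGraph (Fin k)) (U W : Finset (Fin k)) : Prop :=
  ∃ f : Fin k → Fin k, Set.InjOn f ↑U ∧ ∀ u ∈ U, f u ∈ W ∧ H.Adj u (f u)

/-- `U ⊆ Avail` is maximal (w.r.t. inclusion) with a matching in `H` from `U` into `W`
covering `U`. -/
def MaximalMatched (H : SimpleGraph (Fin k)) (W Avail U : Finset (Fin k)) : Prop :=
  U ⊆ Avail ∧ MatchableInto H U W ∧
    ∀ U', U ⊂ U' → U' ⊆ Avail → ¬ MatchableInto H U' W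

/-- `F` is a core of `H`: a vertex-induced subgraph such that every minimum vertex cover of `F`
is a vertex cover of `H`. -/
def IsCore (F H : SimpleGraph (Fin k)) : Prop :=
  (∃ S : Finset (Fin k), F = restrict H S) ∧
    ∀ C : Finset (Fin k), IsVC F C → C.card = vc F → IsVC H C

/-- `H` is in the `(i,e)`-boundary: `vc(H) = i` and `vc(H ∪ {e}) = i + 1`. -/
def InBoundary (i : ℕ) (H : SimpleGraph (Fin k)) (e : Sym2 (Fin k)) : Prop :=
  vc H = i ∧ vc (H ⊔ SimpleGraph.fromEdgeSet {e}) = i + 1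

end CliqueSA

namespace CliqueSA


private lemma vcSet_nonempty (H : SimpleGraph (Fin k)) :
    {m | ∃ C : Finset (Fin k), IsVC H C ∧ C.card = m}.Nonempty :=
  ⟨(Finset.univ : Finset (Fin k)).card, Finset.univ,
    fun u _ _ => Or.inl (Finset.mem_univ u), rfl⟩

noncomputable def minCover (H : SimpleGraph (Fin k)) : Finset (Fin k) :=
  (Nat.sInf_mem (vcSet_nonempty H)).choose ∩ suppF H

lemma mem_suppF {H : SimpleGraph (Fin k)} {x : Fin k} : x ∈ suppF H ↔ x ∈ H.support := by
  simp [suppF]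

lemma minCover_subset (H : SimpleGraph (Fin k)) : minCover H ⊆ suppF H :=
  Finset.inter_subset_right

lemma card_minCover_le (H : SimpleGraph (Fin k)) : (minCover H).card ≤ vc H := by
  have h := (Nat.sInf_mem (vcSet_nonempty H)).choose_spec
  calc (minCover H).card ≤ _ := Finset.card_le_card Finset.inter_subset_left
    _ = vc H := h.2

lemma isVC_minCover (H : SimpleGraph (Fin k)) : IsVC H (minCover H) := by
  have h := (Nat.sInf_mem (vcSet_nonempty H)).choose_spec
  intro u v huv
  have hu : u ∈ suppF H := mem_suppF.2 ⟨v, huv⟩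
  have hv : v ∈ suppF H := mem_suppF.2 ⟨u, huv.symm⟩
  rcases h.1 huv with h' | h'
  · exact Or.inl (Finset.mem_inter.2 ⟨h', hu⟩)
  · exact Or.inr (Finset.mem_inter.2 ⟨h', hv⟩)

noncomputable def listOf (H : SimpleGraph (Fin k)) : List (Fin k) :=
  (minCover H).sort (· ≤ ·) ++ ((suppF H \ minCover H).sort (· ≤ ·))

lemma nodup_listOf (H : SimpleGraph (Fin k)) : (listOf H).Nodup := by
  rw [listOf, List.nodup_append]
  refine ⟨Finset.sort_nodup _ _, Finset.sort_nodup _ _, ?_⟩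
  intro x hx1 y hx2
  rw [Finset.mem_sort] at hx1 hx2
  rintro rfl
  exact (Finset.mem_sdiff.1 hx2).2 hx1

lemma mem_listOf {H : SimpleGraph (Fin k)} {x : Fin k} : x ∈ listOf H ↔ x ∈ suppF H := by
  rw [listOf, List.mem_append, Finset.mem_sort, Finset.mem_sort, Finset.mem_sdiff]
  constructor
  · rintro (h | h)
    · exact minCover_subset H h
    · exact h.1
  · intro h
    by_cases hx : x ∈ minCover H
    · exact Or.inl hx
    · exact Or.inr ⟨h, hx⟩

lemma length_listOf (H : SimpleGraph (Fin k)) : (listOf H).length = (suppF H).card := by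
  rw [listOf, List.length_append, Finset.length_sort, Finset.length_sort]
  have := Finset.card_sdiff_add_card_eq_card (minCover_subset H)
  omega

lemma indexOf_lt_of_mem_cover {H : SimpleGraph (Fin k)} {u : Fin k} (hu : u ∈ minCover H) :
    (listOf H).idxOf u < (minCover H).card := by
  rw [listOf, List.idxOf_append_of_mem (by rw [Finset.mem_sort]; exact hu)]
  have := List.idxOf_lt_length_iff.2 (show u ∈ (minCover H).sort (· ≤ ·) by
    rw [Finset.mem_sort]; exact hu)
  rwa [Finset.length_sort] at this

noncomputable def gmap (d : Fin k) (H : SimpleGraph (Fin k)) : ℕ → Fin k :=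
  fun i => (listOf H).getD i d

def Pset (b c : ℕ) : Finset (ℕ × ℕ) :=
  (Finset.range b ×ˢ Finset.range c).filter fun p => p.1 < p.2

noncomputable def Emap (b c : ℕ) (d : Fin k) (H : SimpleGraph (Fin k)) : Finset (ℕ × ℕ) :=
  (Pset b c).filter fun p => H.Adj (gmap d H p.1) (gmap d H p.2)

lemma adj_iff (b c : ℕ) (d : Fin k) (H : SimpleGraph (Fin k))
    (hb : vc H ≤ b) (hS : (suppF H).card ≤ c) (u v : Fin k) :
    H.Adj u v ↔ ∃ p ∈ Emap b c d H, s(u, v) = s(gmap d H p.1, gmap d H p.2) := by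
  constructor
  · intro h
    have hu : u ∈ listOf H := mem_listOf.2 (mem_suppF.2 ⟨v, h⟩)
    have hv : v ∈ listOf H := mem_listOf.2 (mem_suppF.2 ⟨u, h.symm⟩)
    set l := listOf H with hl
    have hiu : l.idxOf u < l.length := List.idxOf_lt_length_iff.2 hu
    have hiv : l.idxOf v < l.length := List.idxOf_lt_length_iff.2 hv
    have hgu : gmap d H (l.idxOf u) = u := by
      rw [gmap, ← hl, List.getD_eq_getElem l d hiu]; exact List.getElem_idxOf hiu
    have hgv : gmap d H (l.idxOf v) = v := by
      rw [gmap, ← hl, List.getD_eq_getElem l d hiv]; exact List.getElem_idxOf hiv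
    have hlen : l.length ≤ c := by rw [hl, length_listOf]; exact hS
    have hne : l.idxOf u ≠ l.idxOf v := by
      intro he
      exact h.ne (by rw [← hgu, he, hgv])
    have hcov : l.idxOf u < (minCover H).card ∨ l.idxOf v < (minCover H).card := by
      rcases isVC_minCover H h with h' | h'
      · exact Or.inl (indexOf_lt_of_mem_cover h')
      · exact Or.inr (indexOf_lt_of_mem_cover h')
    have hvcb : (minCover H).card ≤ b := le_trans (card_minCover_le H) hb
    rcases lt_or_gt_of_ne hne with hlt | hlt
    · refine ⟨(l.idxOf u, l.idxOf v), ?_, ?_⟩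
      · rw [Emap, Finset.mem_filter, Pset, Finset.mem_filter, Finset.mem_product,
          Finset.mem_range, Finset.mem_range]
        refine ⟨⟨⟨by omega, by omega⟩, hlt⟩, ?_⟩
        simpa [hgu, hgv] using h
      · simp [hgu, hgv]
    · refine ⟨(l.idxOf v, l.idxOf u), ?_, ?_⟩
      · rw [Emap, Finset.mem_filter, Pset, Finset.mem_filter, Finset.mem_product,
          Finset.mem_range, Finset.mem_range]
        refine ⟨⟨⟨by omega, by omega⟩, hlt⟩, ?_⟩
        simpa [hgu, hgv] using h.symm
      · simp only [hgu, hgv]; exact Sym2.eq_swap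
  · rintro ⟨p, hp, he⟩
    rw [Emap, Finset.mem_filter] at hp
    rcases Sym2.eq_iff.1 he with ⟨h1, h2⟩ | ⟨h1, h2⟩
    · rw [h1, h2]; exact hp.2
    · rw [h1, h2]; exact hp.2.symm

lemma main_card_bound (b c : ℕ) (hbc : b ≤ c) (hck : c ≤ k) (d : Fin k) :
    (Finset.univ.filter (fun H : SimpleGraph (Fin k) =>
        vc H ≤ b ∧ (suppF H).card ≤ c)).card ≤ k ^ c * 2 ^ (Pset b c).card := by
  have key := Finset.card_le_card_of_injOn
    (s := Finset.univ.filter (fun H : SimpleGraph (Fin k) =>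
        vc H ≤ b ∧ (suppF H).card ≤ c))
    (f := fun H : SimpleGraph (Fin k) => ((fun i : Fin c => gmap d H i), Emap b c d H))
    (t := (Finset.univ : Finset (Fin c → Fin k)) ×ˢ (Pset b c).powerset)
    (fun H _ => by
      rw [Finset.mem_coe, Finset.mem_product]
      exact ⟨Finset.mem_univ _, Finset.mem_powerset.2 (Finset.filter_subset _ _)⟩)
    ?_
  · calc _ ≤ _ := key
      _ = k ^ c * 2 ^ (Pset b c).card := by
        rw [Finset.card_product, Finset.card_powerset, Finset.card_univ]
        simp [Fintype.card_fun]
  · intro H1 h1 H2 h2 heq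
    simp only [Finset.coe_filter, Set.mem_setOf_eq, Finset.mem_univ, true_and] at h1 h2
    have hg : ∀ n, n < c → gmap d H1 n = gmap d H2 n := by
      intro n hn
      exact congrFun (congrArg Prod.fst heq) ⟨n, hn⟩
    have hE : Emap b c d H1 = Emap b c d H2 := congrArg Prod.snd heq
    have hmem : ∀ p ∈ Pset b c, p.1 < c ∧ p.2 < c := by
      intro p hp
      rw [Pset, Finset.mem_filter, Finset.mem_product, Finset.mem_range, Finset.mem_range] at hp
      omega
    ext u v
    rw [adj_iff b c d H1 h1.1 h1.2, adj_iff b c d H2 h2.1 h2.2]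
    constructor
    · rintro ⟨p, hp, he⟩
      have hpc := hmem p (Finset.filter_subset _ _ hp)
      refine ⟨p, hE ▸ hp, ?_⟩
      rw [← hg p.1 hpc.1, ← hg p.2 hpc.2]; exact he
    · rintro ⟨p, hp, he⟩
      have hpc := hmem p (Finset.filter_subset _ _ hp)
      refine ⟨p, hE ▸ hp, ?_⟩
      rw [hg p.1 hpc.1, hg p.2 hpc.2]; exact he

private lemma sum_lemma : ∀ b c : ℕ, b ≤ c →
    2 * (∑ i ∈ Finset.range b, (c - (i + 1))) + b * (b + 1) = 2 * b * c := by
  intro b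
  induction b with
  | zero => simp
  | succ n ih =>
    intro c hc
    obtain ⟨t, rfl⟩ : ∃ t, c = n + 1 + t := ⟨c - (n + 1), by omega⟩
    have ih' := ih (n + 1 + t) (by omega)
    rw [Finset.sum_range_succ]
    have h2 : n + 1 + t - (n + 1) = t := by omega
    rw [h2]
    zify at ih' ⊢
    linear_combination ih'

lemma two_mul_card_Pset (b c : ℕ) (hbc : b ≤ c) :
    2 * (Pset b c).card + b * (b + 1) = 2 * b * c := by
  have h1 : Pset b c = (Finset.range b).biUnion
      (fun i => (Finset.Ico (i + 1) c).image (fun j => (i, j))) := by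
    ext ⟨i, j⟩
    simp only [Pset, Finset.mem_filter, Finset.mem_product, Finset.mem_range,
      Finset.mem_biUnion, Finset.mem_image, Finset.mem_Ico, Prod.mk.injEq]
    constructor
    · rintro ⟨⟨hi, hj⟩, hij⟩
      exact ⟨i, hi, j, ⟨by omega, hj⟩, rfl, rfl⟩
    · rintro ⟨a, ha, x, ⟨hx1, hx2⟩, rfl, rfl⟩
      exact ⟨⟨ha, hx2⟩, by omega⟩
  have hdisj : ∀ x ∈ Finset.range b, ∀ y ∈ Finset.range b, x ≠ y →
      Disjoint ((Finset.Ico (x + 1) c).image (fun j => (x, j)))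
        ((Finset.Ico (y + 1) c).image (fun j => (y, j))) := by
    intro x _ y _ hxy
    rw [Finset.disjoint_left]
    rintro ⟨a, b'⟩ ha hb
    simp only [Finset.mem_image, Prod.mk.injEq] at ha hb
    obtain ⟨_, _, rfl, _⟩ := ha
    obtain ⟨_, _, rfl, _⟩ := hb
    exact hxy rfl
  rw [h1, Finset.card_biUnion hdisj]
  have h2 : ∀ i ∈ Finset.range b,
      ((Finset.Ico (i + 1) c).image (fun j => (i, j))).card = c - (i + 1) := by
    intro i _
    rw [Finset.card_image_of_injective _ (fun a b' h => (Prod.ext_iff.1 h).2), Nat.card_Ico]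
  rw [Finset.sum_congr rfl h2]
  exact sum_lemma b c hbc


/-- Lemma `lem:count-H`: there are at most
`2^{c log₂ k + b(c - (b+1)/2)} ≤ 2^{c(b + log₂ k)}` graphs `H` on `[k]` with a vertex cover of
size at most `b` and at most `c` non-isolated vertices. -/
theorem count_pattern_graphs (k b c : ℕ) (hbc : b ≤ c) (hck : c ≤ k) :
    ((Finset.univ.filter (fun H : SimpleGraph (Fin k) =>
        vc H ≤ b ∧ (suppF H).card ≤ c)).card : ℝ) ≤
      (2 : ℝ) ^ ((c : ℝ) * Real.logb 2 k + (b : ℝ) * ((c : ℝ) - ((b : ℝ) + 1) / 2)) ∧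
    ((Finset.univ.filter (fun H : SimpleGraph (Fin k) =>
        vc H ≤ b ∧ (suppF H).card ≤ c)).card : ℝ) ≤
      (2 : ℝ) ^ ((c : ℝ) * ((b : ℝ) + Real.logb 2 k)) := by
  have hfirst : ((Finset.univ.filter (fun H : SimpleGraph (Fin k) =>
      vc H ≤ b ∧ (suppF H).card ≤ c)).card : ℝ) ≤
      (2 : ℝ) ^ ((c : ℝ) * Real.logb 2 k + (b : ℝ) * ((c : ℝ) - ((b : ℝ) + 1) / 2)) := by
    rcases Nat.eq_zero_or_pos k with rfl | hk
    · obtain rfl : c = 0 := by omega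
      obtain rfl : b = 0 := by omega
      have hsub : Subsingleton (SimpleGraph (Fin 0)) :=
        ⟨fun G1 G2 => SimpleGraph.ext (by ext u v; exact u.elim0)⟩
      have hcard : (Finset.univ.filter (fun H : SimpleGraph (Fin 0) =>
          vc H ≤ 0 ∧ (suppF H).card ≤ 0)).card ≤ 1 := by
        calc _ ≤ (Finset.univ : Finset (SimpleGraph (Fin 0))).card :=
              Finset.card_le_card (Finset.filter_subset _ _)
          _ = Fintype.card (SimpleGraph (Fin 0)) := Finset.card_univ
          _ ≤ 1 := Fintype.card_le_one_iff_subsingleton.2 hsub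
      have : ((0 : ℝ) * Real.logb 2 0 + (0 : ℝ) * ((0 : ℝ) - ((0 : ℝ) + 1) / 2)) = 0 := by
        norm_num
      rw [Nat.cast_zero, this, Real.rpow_zero]
      exact_mod_cast hcard
    · set d : Fin k := ⟨0, hk⟩
      have hN := main_card_bound b c hbc hck d
      have hP := two_mul_card_Pset b c hbc
      set m := (Pset b c).card with hm
      set L := Real.logb 2 k with hL
      have hNr : ((Finset.univ.filter (fun H : SimpleGraph (Fin k) =>
          vc H ≤ b ∧ (suppF H).card ≤ c)).card : ℝ) ≤ (k : ℝ) ^ c * 2 ^ m := by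
        exact_mod_cast hN
      have hk1 : (2 : ℝ) ^ ((c : ℝ) * L) = (k : ℝ) ^ c := by
        rw [mul_comm, Real.rpow_mul (by norm_num), hL,
          Real.rpow_logb (by norm_num) (by norm_num) (by exact_mod_cast hk),
          Real.rpow_natCast]
      have hPr : 2 * (m : ℝ) + (b : ℝ) * ((b : ℝ) + 1) = 2 * (b : ℝ) * (c : ℝ) := by
        exact_mod_cast hP
      have hmle : (m : ℝ) ≤ (b : ℝ) * ((c : ℝ) - ((b : ℝ) + 1) / 2) := by nlinarith [hPr]
      have h2m : ((2 : ℝ) ^ m) ≤ (2 : ℝ) ^ ((b : ℝ) * ((c : ℝ) - ((b : ℝ) + 1) / 2)) := by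
        calc (2 : ℝ) ^ m = (2 : ℝ) ^ ((m : ℕ) : ℝ) := (Real.rpow_natCast 2 m).symm
          _ ≤ _ := Real.rpow_le_rpow_of_exponent_le one_le_two hmle
      calc ((Finset.univ.filter (fun H : SimpleGraph (Fin k) =>
          vc H ≤ b ∧ (suppF H).card ≤ c)).card : ℝ) ≤ (k : ℝ) ^ c * 2 ^ m := hNr
        _ ≤ (2 : ℝ) ^ ((c : ℝ) * L) * (2 : ℝ) ^ ((b : ℝ) * ((c : ℝ) - ((b : ℝ) + 1) / 2)) := by
            refine mul_le_mul (le_of_eq hk1.symm) h2m (by positivity) (by positivity)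
        _ = (2 : ℝ) ^ ((c : ℝ) * L + (b : ℝ) * ((c : ℝ) - ((b : ℝ) + 1) / 2)) :=
            (Real.rpow_add (by norm_num) _ _).symm
  refine ⟨hfirst, hfirst.trans (Real.rpow_le_rpow_of_exponent_le one_le_two ?_)⟩
  have hb0 : (0 : ℝ) ≤ (b : ℝ) := Nat.cast_nonneg b
  nlinarith [mul_nonneg hb0 (by linarith : (0:ℝ) ≤ (b : ℝ) + 1)]


end CliqueSA
end

section
/- Let H be a graph on vertex set [k], let W be a minimum vertex cover of H, and let U₁ ⊆ [k] ∖ W be a maximal (with respect to set inclusion) subset such that there is a matching in H between U₁ and W covering every vertex of U₁. Then vc(H) ≤ vc(H[W ∪ U₁]), and hence vc(H) = vc(H[W ∪ U₁]). -/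
open Finset
open scoped Classical

namespace CliqueSA

variable {k : ℕ}

/-- Auxiliary: `a` is linked from `b` if the matching partner of `b` is adjacent to `a`. -/
def LinkR (H : SimpleGraph (Fin k)) (U₁ : Finset (Fin k)) (f : Fin k → Fin k)
    (a b : Fin k) : Prop :=
  ∃ u ∈ U₁, f u = b ∧ H.Adj u a

/-- Auxiliary: an alternating chain of `W`-vertices whose last element has a neighbor
outside `W ∪ U₁`. -/
def GoodL (H : SimpleGraph (Fin k)) (W U₁ : Finset (Fin k)) (f : Fin k → Fin k)
    (l : List (Fin k)) : Prop :=
  (∀ v ∈ l, v ∈ W) ∧ l.Chain' (LinkR H U₁ f) ∧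
    ∃ b, l.getLast? = some b ∧ ∃ x, x ∉ W ∧ x ∉ U₁ ∧ H.Adj b x

/-- Auxiliary: `w` is reachable by an alternating chain. -/
def ReachW (H : SimpleGraph (Fin k)) (W U₁ : Finset (Fin k)) (f : Fin k → Fin k)
    (w : Fin k) : Prop :=
  ∃ l, GoodL H W U₁ f l ∧ l.head? = some w

lemma vc_le_card {H : SimpleGraph (Fin k)} {C : Finset (Fin k)} (h : IsVC H C) :
    vc H ≤ C.card :=
  Nat.sInf_le ⟨C, h, rfl⟩

lemma exists_min_vc (H : SimpleGraph (Fin k)) : ∃ C, IsVC H C ∧ C.card = vc H := by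
  have h : {m | ∃ C : Finset (Fin k), IsVC H C ∧ C.card = m}.Nonempty :=
    ⟨(Finset.univ : Finset (Fin k)).card,
      ⟨Finset.univ, fun u _ _ => Or.inl (Finset.mem_univ u), rfl⟩⟩
  exact Nat.sInf_mem h

lemma GoodL_suffix {H : SimpleGraph (Fin k)} {W U₁ : Finset (Fin k)} {f : Fin k → Fin k}
    {l₁ l₂ : List (Fin k)} (h : GoodL H W U₁ f (l₁ ++ l₂)) (h2 : l₂ ≠ []) :
    GoodL H W U₁ f l₂ := by
  obtain ⟨hmem, hch, b, hb, hx⟩ := h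
  refine ⟨fun v hv => hmem v (List.mem_append_right _ hv),
    (List.isChain_append.mp hch).2.1, b, ?_, hx⟩
  obtain ⟨c, hc⟩ := Option.isSome_iff_exists.mp (List.getLast?_isSome.mpr h2)
  rw [List.getLast?_append, hc] at hb
  simp only [Option.some_or] at hb
  rw [hc, hb]

/-- The augmenting construction along a chain. -/
lemma aug {H : SimpleGraph (Fin k)} {W U₁ : Finset (Fin k)} {f : Fin k → Fin k}
    (hfinj : Set.InjOn f ↑U₁) (hfm : ∀ u ∈ U₁, f u ∈ W ∧ H.Adj u (f u)) :
    ∀ (n : ℕ) (l : List (Fin k)) (w : Fin k), l.length ≤ n → GoodL H W U₁ f l →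
      l.head? = some w →
    ∃ (x : Fin k) (g : Fin k → Fin k), x ∉ W ∧ x ∉ U₁ ∧
      (g x ∈ l ∧ g x ∈ W ∧ H.Adj x (g x)) ∧
      (∀ u ∈ U₁, f u ≠ w → (g u ∈ W ∧ H.Adj u (g u)) ∧ (g u = f u ∨ g u ∈ l)) ∧
      (∀ u ∈ U₁, f u ≠ w → g u ≠ g x) ∧
      (∀ u₁ ∈ U₁, ∀ u₂ ∈ U₁, f u₁ ≠ w → f u₂ ≠ w → g u₁ = g u₂ → u₁ = u₂) := by
  intro n
  induction n with
  | zero =>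
    intro l w hlen hgood hhead
    cases l with
    | nil => simp at hhead
    | cons a t => simp at hlen
  | succ n ih =>
    intro l w hlen hgood hhead
    obtain ⟨t, rfl⟩ : ∃ t, l = w :: t := by
      cases l with
      | nil => simp at hhead
      | cons a t =>
        have haw : w = a := by simpa using hhead.symm
        exact ⟨t, by rw [haw]⟩
    cases t with
    | nil =>
      -- base case: the last element of the chain is `w` itself
      obtain ⟨hmem, _, b, hb, x, hxW, hxU, hadj⟩ := hgood
      have hbw : w = b := by simpa using hb
      subst hbw
      refine ⟨x, Function.update f x w, hxW, hxU, ?_, ?_, ?_, ?_⟩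
      · refine ⟨?_, ?_, ?_⟩
        · simp
        · simp only [Function.update_self]; exact hmem w (by simp)
        · simp only [Function.update_self]; exact hadj.symm
      · intro u hu hfu
        have hux : u ≠ x := fun h => hxU (h ▸ hu)
        rw [Function.update_of_ne hux]
        exact ⟨hfm u hu, Or.inl rfl⟩
      · intro u hu hfu
        have hux : u ≠ x := fun h => hxU (h ▸ hu)
        rw [Function.update_of_ne hux, Function.update_self]
        exact hfu
      · intro u₁ h₁ u₂ h₂ hf₁ hf₂
        have h1x : u₁ ≠ x := fun h => hxU (h ▸ h₁)
        have h2x : u₂ ≠ x := fun h => hxU (h ▸ h₂)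
        rw [Function.update_of_ne h1x, Function.update_of_ne h2x]
        exact fun h => hfinj h₁ h₂ h
    | cons w' t' =>
      by_cases hwt : w ∈ w' :: t'
      · -- the head repeats later in the chain: use the shorter suffix
        obtain ⟨p, q, hpq⟩ := List.append_of_mem hwt
        have hsplit : w :: w' :: t' = (w :: p) ++ (w :: q) := by simp [hpq]
        have hgq : GoodL H W U₁ f (w :: q) := GoodL_suffix (hsplit ▸ hgood) (by simp)
        have hlen' : (w :: q).length ≤ n := by
          have : (w' :: t').length = p.length + (w :: q).length := by
            rw [hpq]; simp [List.length_append]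
          simp only [List.length_cons] at hlen this ⊢
          omega
        obtain ⟨x, g, hxW, hxU, hgx, hprop, hne, hinj⟩ := ih (w :: q) w hlen' hgq rfl
        have hsub : ∀ v, v ∈ w :: q → v ∈ w :: w' :: t' := by
          intro v hv
          rw [hsplit]
          exact List.mem_append_right _ hv
        exact ⟨x, g, hxW, hxU, ⟨hsub _ hgx.1, hgx.2⟩,
          fun u hu hf => ⟨(hprop u hu hf).1, (hprop u hu hf).2.imp id (hsub _)⟩,
          hne, hinj⟩
      · -- genuine step
        have hgt : GoodL H W U₁ f (w' :: t') :=
          GoodL_suffix (l₁ := [w]) hgood (by simp)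
        have hlen' : (w' :: t').length ≤ n := by
          simp only [List.length_cons] at hlen ⊢; omega
        obtain ⟨x, g, hxW, hxU, hgx, hprop, hne, hinj⟩ := ih (w' :: t') w' hlen' hgt rfl
        obtain ⟨u, hu, hfu, huadj⟩ : LinkR H U₁ f w w' := by
          have := (List.isChain_cons.mp hgood.2.1).1
          exact this w' rfl
        have hwW : w ∈ W := hgood.1 w (by simp)
        have hxu : x ≠ u := fun h => hxU (h ▸ hu)
        refine ⟨x, Function.update g u w, hxW, hxU, ?_, ?_, ?_, ?_⟩
        · rw [Function.update_of_ne hxu]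
          exact ⟨List.mem_cons_of_mem _ hgx.1, hgx.2⟩
        · intro v hv hfv
          by_cases hvu : v = u
          · subst hvu
            rw [Function.update_self]
            exact ⟨⟨hwW, huadj⟩, Or.inr (by simp)⟩
          · have hfv' : f v ≠ w' := fun h => hvu (hfinj hv hu (h.trans hfu.symm))
            rw [Function.update_of_ne hvu]
            exact ⟨(hprop v hv hfv').1,
              (hprop v hv hfv').2.imp id (List.mem_cons_of_mem _)⟩
        · intro v hv hfv
          rw [Function.update_of_ne hxu]
          by_cases hvu : v = u
          · subst hvu
            rw [Function.update_self]
            exact fun h => hwt (h ▸ hgx.1)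
          · have hfv' : f v ≠ w' := fun h => hvu (hfinj hv hu (h.trans hfu.symm))
            rw [Function.update_of_ne hvu]
            exact hne v hv hfv'
        · intro v₁ h₁ v₂ h₂ hf₁ hf₂
          by_cases hv₁ : v₁ = u <;> by_cases hv₂ : v₂ = u
          · intro _; rw [hv₁, hv₂]
          · subst hv₁
            have hfv₂ : f v₂ ≠ w' := fun h => hv₂ (hfinj h₂ hu (h.trans hfu.symm))
            rw [Function.update_self, Function.update_of_ne hv₂]
            intro h
            exfalso
            rcases (hprop v₂ h₂ hfv₂).2 with hcase | hcase
            · exact hf₂ (h.trans hcase).symm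
            · rw [← h] at hcase; exact hwt hcase
          · subst hv₂
            have hfv₁ : f v₁ ≠ w' := fun h => hv₁ (hfinj h₁ hu (h.trans hfu.symm))
            rw [Function.update_self, Function.update_of_ne hv₁]
            intro h
            exfalso
            rcases (hprop v₁ h₁ hfv₁).2 with hcase | hcase
            · exact hf₁ (hcase.symm.trans h)
            · rw [h] at hcase; exact hwt hcase
          · have hfv₁ : f v₁ ≠ w' := fun h => hv₁ (hfinj h₁ hu (h.trans hfu.symm))
            have hfv₂ : f v₂ ≠ w' := fun h => hv₂ (hfinj h₂ hu (h.trans hfu.symm))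
            rw [Function.update_of_ne hv₁, Function.update_of_ne hv₂]
            exact hinj v₁ h₁ v₂ h₂ hfv₁ hfv₂

/-- Every reachable vertex is matched, by maximality of `U₁`. -/
lemma reach_matched {H : SimpleGraph (Fin k)} {W U₁ : Finset (Fin k)} {f : Fin k → Fin k}
    (hsub : U₁ ⊆ Finset.univ \ W)
    (hfinj : Set.InjOn f ↑U₁) (hfm : ∀ u ∈ U₁, f u ∈ W ∧ H.Adj u (f u))
    (hmax : ∀ U', U₁ ⊂ U' → U' ⊆ Finset.univ \ W → ¬ MatchableInto H U' W)
    {w : Fin k} (hr : ReachW H W U₁ f w) : ∃ u ∈ U₁, f u = w := by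
  by_contra hnm
  push_neg at hnm
  obtain ⟨l, hgood, hhead⟩ := hr
  obtain ⟨x, g, hxW, hxU, hgx, hprop, hne, hinj⟩ :=
    aug hfinj hfm l.length l w le_rfl hgood hhead
  have hss : insert x U₁ ⊆ Finset.univ \ W := by
    intro v hv
    rcases Finset.mem_insert.mp hv with rfl | hv
    · exact Finset.mem_sdiff.mpr ⟨Finset.mem_univ v, hxW⟩
    · exact hsub hv
  have hmi : MatchableInto H (insert x U₁) W := by
    refine ⟨g, ?_, ?_⟩
    · rw [Finset.coe_insert]
      intro a ha b hb hab
      rcases Set.mem_insert_iff.mp ha with ha' | ha'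
      · rcases Set.mem_insert_iff.mp hb with hb' | hb'
        · rw [ha', hb']
        · exfalso
          rw [ha'] at hab
          exact hne b (Finset.mem_coe.mp hb') (hnm b (Finset.mem_coe.mp hb')) hab.symm
      · rcases Set.mem_insert_iff.mp hb with hb' | hb'
        · exfalso
          rw [hb'] at hab
          exact hne a (Finset.mem_coe.mp ha') (hnm a (Finset.mem_coe.mp ha')) hab
        · exact hinj a (Finset.mem_coe.mp ha') b (Finset.mem_coe.mp hb')
            (hnm a (Finset.mem_coe.mp ha')) (hnm b (Finset.mem_coe.mp hb')) hab
    · intro v hv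
      rcases Finset.mem_insert.mp hv with rfl | hv
      · exact ⟨hgx.2.1, hgx.2.2⟩
      · exact (hprop v hv (hnm v hv)).1
  exact hmax (insert x U₁) (Finset.ssubset_insert hxU) hss hmi

/-- Key lemma: every vertex cover of the restriction gives an upper bound on `vc H`. -/
lemma key {H : SimpleGraph (Fin k)} {W U₁ : Finset (Fin k)}
    (hW : IsMinVC H W) (hU₁ : MaximalMatched H W (Finset.univ \ W) U₁)
    (C : Finset (Fin k)) (hC : IsVC (restrict H (W ∪ U₁)) C) : vc H ≤ C.card := by
  obtain ⟨hsub, ⟨f, hfinj, hfm⟩, hmax⟩ := hU₁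
  have hUW : ∀ u ∈ U₁, u ∉ W := fun u hu => (Finset.mem_sdiff.mp (hsub hu)).2
  set T : Finset (Fin k) := (W \ C).filter (fun w => ReachW H W U₁ f w) with hT
  set P : Finset (Fin k) := U₁.filter (fun u => f u ∈ T) with hP
  have hPC : P ⊆ C := by
    intro u hu
    obtain ⟨huU, hfuT⟩ := Finset.mem_filter.mp hu
    have hfadj : (restrict H (W ∪ U₁)).Adj u (f u) :=
      ⟨(hfm u huU).2, Finset.mem_union_right _ huU,
        Finset.mem_union_left _ (hfm u huU).1⟩
    rcases hC hfadj with h | h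
    · exact h
    · exact absurd h (Finset.mem_sdiff.mp (Finset.mem_filter.mp hfuT).1).2.elim
  have hTP : T ⊆ P.image f := by
    intro w hw
    obtain ⟨u, hu, hfu⟩ := reach_matched hsub hfinj hfm hmax
      (Finset.mem_filter.mp hw).2
    exact Finset.mem_image.mpr ⟨u, Finset.mem_filter.mpr ⟨hu, hfu ▸ hw⟩, hfu⟩
  have hTcard : T.card ≤ P.card :=
    le_trans (Finset.card_le_card hTP) Finset.card_image_le
  set C' : Finset (Fin k) := (C \ P) ∪ T with hC'
  have hC'card : C'.card ≤ C.card := by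
    have h1 : C'.card ≤ (C \ P).card + T.card := Finset.card_union_le _ _
    have h2 : (C \ P).card = C.card - P.card := Finset.card_sdiff_of_subset hPC
    have h3 : P.card ≤ C.card := Finset.card_le_card hPC
    omega
  have hC'VC : IsVC H C' := by
    have main : ∀ a b, H.Adj a b → a ∈ W → a ∈ C' ∨ b ∈ C' := by
      intro a b hab haW
      by_cases haC : a ∈ C
      · exact Or.inl (Finset.mem_union_left _ (Finset.mem_sdiff.mpr
          ⟨haC, fun hp => hUW a (Finset.mem_filter.mp hp).1 haW⟩))
      · by_cases hbWU : b ∈ W ∪ U₁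
        · have hFadj : (restrict H (W ∪ U₁)).Adj a b :=
            ⟨hab, Finset.mem_union_left _ haW, hbWU⟩
          have hbC : b ∈ C := (hC hFadj).resolve_left haC
          by_cases hbP : b ∈ P
          · -- b is matched into T, so a becomes reachable by a step
            obtain ⟨hbU, hfbT⟩ := Finset.mem_filter.mp hbP
            obtain ⟨l, hgood, hhead⟩ := (Finset.mem_filter.mp hfbT).2
            have hra : ReachW H W U₁ f a := by
              refine ⟨a :: l, ⟨?_, ?_, ?_⟩, rfl⟩
              · intro v hv
                rcases List.mem_cons.mp hv with rfl | hv
                · exact haW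
                · exact hgood.1 v hv
              · refine List.isChain_cons.mpr ⟨?_, hgood.2.1⟩
                intro y hy
                rw [hhead] at hy
                obtain rfl : f b = y := by simpa using hy
                exact ⟨b, hbU, rfl, hab.symm⟩
              · obtain ⟨c, hc, hx⟩ := hgood.2.2
                refine ⟨c, ?_, hx⟩
                have : (a :: l) = [a] ++ l := rfl
                rw [this, List.getLast?_append, hc]
                simp
            exact Or.inl (Finset.mem_union_right _ (Finset.mem_filter.mpr
              ⟨Finset.mem_sdiff.mpr ⟨haW, haC⟩, hra⟩))
          · exact Or.inr (Finset.mem_union_left _ (Finset.mem_sdiff.mpr ⟨hbC, hbP⟩))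
        · -- b is outside W ∪ U₁ : a is reachable by the base case
          have hbW : b ∉ W := fun h => hbWU (Finset.mem_union_left _ h)
          have hbU : b ∉ U₁ := fun h => hbWU (Finset.mem_union_right _ h)
          have hra : ReachW H W U₁ f a := by
            refine ⟨[a], ⟨?_, List.isChain_singleton a, a, by simp, b, hbW, hbU, hab⟩, rfl⟩
            intro v hv
            rcases List.mem_singleton.mp hv with rfl
            exact haW
          exact Or.inl (Finset.mem_union_right _ (Finset.mem_filter.mpr
            ⟨Finset.mem_sdiff.mpr ⟨haW, haC⟩, hra⟩))
    intro u v huv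
    rcases hW.1 huv with h | h
    · exact main u v huv h
    · exact Or.symm (main v u huv.symm h)
  exact le_trans (vc_le_card hC'VC) hC'card

/-- Lemma `cl:core-vc`: if `W` is a minimum vertex cover of `H` and
`U₁ ⊆ [k] ∖ W` is maximal with a matching in `H` from `U₁` into `W` covering `U₁`, then
`vc(H) ≤ vc(H[W ∪ U₁])`, hence `vc(H) = vc(H[W ∪ U₁])`. -/
theorem vc_restrict_core (k : ℕ) (H : SimpleGraph (Fin k)) (W U₁ : Finset (Fin k))
    (hW : IsMinVC H W)
    (hU₁ : MaximalMatched H W (Finset.univ \ W) U₁) :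
    vc H ≤ vc (restrict H (W ∪ U₁)) ∧ vc H = vc (restrict H (W ∪ U₁)) := by
  have h2 : vc (restrict H (W ∪ U₁)) ≤ vc H := by
    have hWVC : IsVC (restrict H (W ∪ U₁)) W := fun u v h => hW.1 h.1
    calc vc (restrict H (W ∪ U₁)) ≤ W.card := vc_le_card hWVC
    _ = vc H := hW.2
  have h1 : vc H ≤ vc (restrict H (W ∪ U₁)) := by
    obtain ⟨C, hCvc, hcard⟩ := exists_min_vc (restrict H (W ∪ U₁))
    calc vc H ≤ C.card := key hW hU₁ C hCvc
    _ = vc (restrict H (W ∪ U₁)) := hcard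
  exact ⟨h1, le_antisymm h1 h2⟩

end CliqueSA
end

section
/- Let H be a graph on vertex set [k], let W be a minimum vertex cover of H, let U₁ ⊆ [k] ∖ W be a maximal (with respect to inclusion) subset admitting a matching in H between U₁ and W covering U₁, and let U₂ ⊆ [k] ∖ (W ∪ U₁) be a maximal subset admitting a matching in H between U₂ and W covering U₂. Then every minimum vertex cover of H[W ∪ U₁ ∪ U₂] is a vertex cover of H. -/
open Finset
open scoped Classical

namespace CliqueSA

noncomputable def nbrW {k : ℕ} (H : SimpleGraph (Fin k)) (W : Finset (Fin k)) (x : Fin k) :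
    Finset (Fin k) := W.filter (fun w => H.Adj x w)

lemma mem_nbrW {k : ℕ} {H : SimpleGraph (Fin k)} {W : Finset (Fin k)} {x w : Fin k} :
    w ∈ nbrW H W x ↔ w ∈ W ∧ H.Adj x w := by simp [nbrW]

lemma matchable_of_inj {k : ℕ} (H : SimpleGraph (Fin k)) (W S : Finset (Fin k))
    (g : {x // x ∈ S} → Fin k) (hg : Function.Injective g)
    (hgm : ∀ x : {x // x ∈ S}, g x ∈ nbrW H W ↑x) : MatchableInto H S W := by
  refine ⟨fun x => if h : x ∈ S then g ⟨x, h⟩ else x, ?_, ?_⟩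
  · intro x hx y hy hxy
    rw [Finset.mem_coe] at hx hy
    simp only [dif_pos hx, dif_pos hy] at hxy
    exact congrArg Subtype.val (hg hxy)
  · intro a ha
    simp only [dif_pos ha]
    have := hgm ⟨a, ha⟩
    rw [mem_nbrW] at this
    exact this

/-- Hall-type blocking set extracted from maximality. -/
lemma exists_blocking_set {k : ℕ} (H : SimpleGraph (Fin k)) (W U : Finset (Fin k))
    (u : Fin k) (f : Fin k → Fin k) (hinj : Set.InjOn f ↑U)
    (hf : ∀ a ∈ U, f a ∈ W ∧ H.Adj a (f a))
    (hmax : ¬ MatchableInto H (insert u U) W) :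
    ∃ T ⊆ U, (nbrW H W u ⊆ T.image f) ∧ ∀ a ∈ T, nbrW H W a ⊆ T.image f := by
  have hhall : ¬ ∀ s : Finset {x // x ∈ insert u U},
      s.card ≤ (s.biUnion fun x => nbrW H W ↑x).card := by
    intro hs
    obtain ⟨g, hginj, hgm⟩ :=
      (Finset.all_card_le_biUnion_card_iff_exists_injective
        (fun x : {x // x ∈ insert u U} => nbrW H W ↑x)).mp hs
    exact hmax (matchable_of_inj H W _ g hginj hgm)
  push_neg at hhall
  obtain ⟨s, hs⟩ := hhall
  set S : Finset (Fin k) := s.image Subtype.val with hSdef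
  have hScard : S.card = s.card := Finset.card_image_of_injective s Subtype.val_injective
  have hSsub : S ⊆ insert u U := by
    intro x hx
    obtain ⟨y, _, rfl⟩ := Finset.mem_image.mp hx
    exact y.2
  have hbi : S.biUnion (nbrW H W) = s.biUnion fun x => nbrW H W ↑x := by
    apply Finset.image_biUnion
  have hbicard : (S.biUnion (nbrW H W)).card < S.card := by
    rw [hbi, hScard]; exact hs
  have huS : u ∈ S := by
    by_contra huS
    have hSU : S ⊆ U := by
      intro x hx
      rcases Finset.mem_insert.mp (hSsub hx) with h | h
      · exact absurd (h ▸ hx) huS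
      · exact h
    have himg : S.image f ⊆ S.biUnion (nbrW H W) := by
      intro w hw
      obtain ⟨a, ha, rfl⟩ := Finset.mem_image.mp hw
      exact Finset.subset_biUnion_of_mem _ ha
        (mem_nbrW.mpr ⟨(hf a (hSU ha)).1, (hf a (hSU ha)).2⟩)
    have h1 : S.card = (S.image f).card :=
      (Finset.card_image_of_injOn (hinj.mono (by exact_mod_cast hSU))).symm
    have h2 := Finset.card_le_card himg
    omega
  refine ⟨S.erase u, ?_, ?_, ?_⟩
  · intro x hx
    have hx' := Finset.mem_erase.mp hx
    rcases Finset.mem_insert.mp (hSsub hx'.2) with h | h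
    · exact absurd h hx'.1
    · exact h
  all_goals {
    have hTU : S.erase u ⊆ U := by
      intro x hx
      have hx' := Finset.mem_erase.mp hx
      rcases Finset.mem_insert.mp (hSsub hx'.2) with h | h
      · exact absurd h hx'.1
      · exact h
    have himg : (S.erase u).image f ⊆ S.biUnion (nbrW H W) := by
      intro w hw
      obtain ⟨a, ha, rfl⟩ := Finset.mem_image.mp hw
      exact Finset.subset_biUnion_of_mem _ (Finset.mem_of_mem_erase ha)
        (mem_nbrW.mpr ⟨(hf a (hTU ha)).1, (hf a (hTU ha)).2⟩)
    have hc1 : ((S.erase u).image f).card = (S.erase u).card :=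
      Finset.card_image_of_injOn (hinj.mono (by exact_mod_cast hTU))
    have hc2 : (S.erase u).card = S.card - 1 := Finset.card_erase_of_mem huS
    have hc3 : 1 ≤ S.card := Finset.card_pos.mpr ⟨u, huS⟩
    have heq : (S.erase u).image f = S.biUnion (nbrW H W) := by
      apply Finset.eq_of_subset_of_card_le himg
      omega
    first
    | · rw [heq]
        exact Finset.subset_biUnion_of_mem _ huS
    | · intro a ha
        rw [heq]
        exact Finset.subset_biUnion_of_mem _ (Finset.mem_of_mem_erase ha)
  }

lemma key_contradiction {k : ℕ} (H : SimpleGraph (Fin k)) (W U₁ U₂ : Finset (Fin k))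
    (hW : IsMinVC H W)
    (hU₁ : MaximalMatched H W (Finset.univ \ W) U₁)
    (hU₂ : MaximalMatched H W (Finset.univ \ (W ∪ U₁)) U₂)
    (C : Finset (Fin k)) (hC : IsVC (restrict H (W ∪ U₁ ∪ U₂)) C)
    (hCcard : C.card = vc (restrict H (W ∪ U₁ ∪ U₂)))
    (u v : Fin k) (huv : H.Adj u v) (hvW : v ∈ W) (huC : u ∉ C) (hvC : v ∉ C) : False := by
  have hvB : v ∈ W ∪ U₁ ∪ U₂ := by simp [hvW]
  by_cases huB : u ∈ W ∪ U₁ ∪ U₂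
  · rcases hC ⟨huv, huB, hvB⟩ with h | h
    · exact huC h
    · exact hvC h
  have huW : u ∉ W := fun h => huB (by simp [h])
  have huU₁ : u ∉ U₁ := fun h => huB (by simp [h])
  have huU₂ : u ∉ U₂ := fun h => huB (by simp [h])
  obtain ⟨hU₁sub, ⟨f₁, hf₁inj, hf₁⟩, hU₁max⟩ := hU₁
  obtain ⟨hU₂sub, ⟨f₂, hf₂inj, hf₂⟩, hU₂max⟩ := hU₂
  have hU₁W : ∀ a ∈ U₁, a ∉ W := by
    intro a ha h
    have := hU₁sub ha
    simp at this
    exact this h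
  have hU₂W : ∀ a ∈ U₂, a ∉ W ∧ a ∉ U₁ := by
    intro a ha
    have := hU₂sub ha
    simp at this
    exact this
  have hmax₁ : ¬ MatchableInto H (insert u U₁) W :=
    hU₁max _ (Finset.ssubset_insert huU₁) (Finset.insert_subset (by simp [huW]) hU₁sub)
  have hmax₂ : ¬ MatchableInto H (insert u U₂) W :=
    hU₂max _ (Finset.ssubset_insert huU₂)
      (Finset.insert_subset (by simp [huW, huU₁]) hU₂sub)
  obtain ⟨T₁, hT₁U, hN₁u, hN₁a⟩ := exists_blocking_set H W U₁ u f₁ hf₁inj hf₁ hmax₁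
  obtain ⟨T₂, hT₂U, hN₂u, hN₂a⟩ := exists_blocking_set H W U₂ u f₂ hf₂inj hf₂ hmax₂
  set N₁ := T₁.image f₁ with hN₁def
  set N₂ := T₂.image f₂ with hN₂def
  have hvn : v ∈ nbrW H W u := mem_nbrW.mpr ⟨hvW, huv⟩
  have hvN₁ : v ∈ N₁ := hN₁u hvn
  have hvN₂ : v ∈ N₂ := hN₂u hvn
  have hN₁W : ∀ w ∈ N₁, w ∈ W := by
    intro w hw
    obtain ⟨a, ha, rfl⟩ := Finset.mem_image.mp hw
    exact (hf₁ a (hT₁U ha)).1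
  have hN₂W : ∀ w ∈ N₂, w ∈ W := by
    intro w hw
    obtain ⟨a, ha, rfl⟩ := Finset.mem_image.mp hw
    exact (hf₂ a (hT₂U ha)).1
  have hTdisj : ∀ a, a ∈ T₁ → a ∈ T₂ → False := fun a h1 h2 =>
    (hU₂W a (hT₂U h2)).2 (hT₁U h1)
  have hT₁B : ∀ a ∈ T₁, a ∈ W ∪ U₁ ∪ U₂ := fun a ha => by simp [hT₁U ha]
  have hT₂B : ∀ a ∈ T₂, a ∈ W ∪ U₁ ∪ U₂ := fun a ha => by simp [hT₂U ha]
  have hedge₁ : ∀ a ∈ T₁, (restrict H (W ∪ U₁ ∪ U₂)).Adj a (f₁ a) := fun a ha =>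
    ⟨(hf₁ a (hT₁U ha)).2, hT₁B a ha, by simp [(hf₁ a (hT₁U ha)).1]⟩
  have hedge₂ : ∀ a ∈ T₂, (restrict H (W ∪ U₁ ∪ U₂)).Adj a (f₂ a) := fun a ha =>
    ⟨(hf₂ a (hT₂U ha)).2, hT₂B a ha, by simp [(hf₂ a (hT₂U ha)).1]⟩
  -- the back-map from covered neighbors to matched partners
  set g : Fin k → Fin k := fun w =>
    if h : w ∈ N₁ then (Finset.mem_image.mp h).choose
    else if h2 : w ∈ N₂ then (Finset.mem_image.mp h2).choose else w with hgdef
  have hg1 : ∀ w ∈ N₁, g w ∈ T₁ ∧ f₁ (g w) = w := by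
    intro w hw
    have hspec := (Finset.mem_image.mp hw).choose_spec
    simp only [hgdef, dif_pos hw]
    exact hspec
  have hg2 : ∀ w, w ∉ N₁ → w ∈ N₂ → g w ∈ T₂ ∧ f₂ (g w) = w := by
    intro w hw hw2
    have hspec := (Finset.mem_image.mp hw2).choose_spec
    simp only [hgdef, dif_neg hw, dif_pos hw2]
    exact hspec
  have hgC : ∀ w ∈ N₁ ∪ N₂, w ∉ C → g w ∈ C := by
    intro w hw hwC
    by_cases h1 : w ∈ N₁
    · obtain ⟨hT, hfeq⟩ := hg1 w h1
      have := hedge₁ _ hT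
      rw [hfeq] at this
      rcases hC this with h | h
      · exact h
      · exact absurd h hwC
    · have h2 : w ∈ N₂ := by
        rcases Finset.mem_union.mp hw with h | h
        · exact absurd h h1
        · exact h
      obtain ⟨hT, hfeq⟩ := hg2 w h1 h2
      have := hedge₂ _ hT
      rw [hfeq] at this
      rcases hC this with h | h
      · exact h
      · exact absurd h hwC
  have hginj : Set.InjOn g ↑((N₁ ∪ N₂) \ C) := by
    intro w hw w' hw' he
    rw [Finset.mem_coe, Finset.mem_sdiff] at hw hw'
    by_cases h1 : w ∈ N₁ <;> by_cases h1' : w' ∈ N₁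
    · have a := hg1 w h1; have b := hg1 w' h1'
      rw [← a.2, ← b.2, he]
    · have a := hg1 w h1
      have h2' : w' ∈ N₂ := by
        rcases Finset.mem_union.mp hw'.1 with h | h
        · exact absurd h h1'
        · exact h
      have b := hg2 w' h1' h2'
      exact absurd (he ▸ a.1) (fun hh => (hTdisj _ hh b.1).elim)
    · have b := hg1 w' h1'
      have h2 : w ∈ N₂ := by
        rcases Finset.mem_union.mp hw.1 with h | h
        · exact absurd h h1
        · exact h
      have a := hg2 w h1 h2
      exact absurd (he ▸ a.1) (fun hh => (hTdisj _ (he ▸ b.1) hh).elim)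
    · have h2 : w ∈ N₂ := by
        rcases Finset.mem_union.mp hw.1 with h | h
        · exact absurd h h1
        · exact h
      have h2' : w' ∈ N₂ := by
        rcases Finset.mem_union.mp hw'.1 with h | h
        · exact absurd h h1'
        · exact h
      have a := hg2 w h1 h2; have b := hg2 w' h1' h2'
      rw [← a.2, ← b.2, he]
  obtain ⟨a₂, ha₂T, ha₂f⟩ := Finset.mem_image.mp hvN₂
  have ha₂C : a₂ ∈ C := by
    have := hedge₂ _ ha₂T
    rw [ha₂f] at this
    rcases hC this with h | h
    · exact h
    · exact absurd h hvC
  have ha₂notin : a₂ ∉ ((N₁ ∪ N₂) \ C).image g := by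
    intro hmem
    obtain ⟨w, hw, hgw⟩ := Finset.mem_image.mp hmem
    rw [Finset.mem_sdiff] at hw
    by_cases h1 : w ∈ N₁
    · exact hTdisj a₂ (hgw ▸ (hg1 w h1).1) ha₂T
    · have h2 : w ∈ N₂ := by
        rcases Finset.mem_union.mp hw.1 with h | h
        · exact absurd h h1
        · exact h
      have a := hg2 w h1 h2
      have : w = v := by rw [← a.2, hgw, ha₂f]
      exact h1 (this ▸ hvN₁)
  have himgsub : insert a₂ (((N₁ ∪ N₂) \ C).image g) ⊆ (T₁ ∪ T₂) ∩ C := by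
    intro x hx
    rcases Finset.mem_insert.mp hx with rfl | hx
    · exact Finset.mem_inter.mpr ⟨Finset.mem_union_right _ ha₂T, ha₂C⟩
    · obtain ⟨w, hw, rfl⟩ := Finset.mem_image.mp hx
      rw [Finset.mem_sdiff] at hw
      refine Finset.mem_inter.mpr ⟨?_, hgC w hw.1 hw.2⟩
      by_cases h1 : w ∈ N₁
      · exact Finset.mem_union_left _ (hg1 w h1).1
      · have h2 : w ∈ N₂ := by
          rcases Finset.mem_union.mp hw.1 with h | h
          · exact absurd h h1
          · exact h
        exact Finset.mem_union_right _ (hg2 w h1 h2).1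
  have hcard1 : ((N₁ ∪ N₂) \ C).card + 1 ≤ ((T₁ ∪ T₂) ∩ C).card := by
    have h1 : (insert a₂ (((N₁ ∪ N₂) \ C).image g)).card
        = ((N₁ ∪ N₂) \ C).card + 1 := by
      rw [Finset.card_insert_of_notMem ha₂notin, Finset.card_image_of_injOn hginj]
    have h2 := Finset.card_le_card himgsub
    omega
  -- the smaller cover
  set C' := (C \ (T₁ ∪ T₂)) ∪ ((N₁ ∪ N₂) \ C) with hC'def
  have hTnotW : ∀ a ∈ T₁ ∪ T₂, a ∉ W := by
    intro a ha
    rcases Finset.mem_union.mp ha with h | h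
    · exact hU₁W a (hT₁U h)
    · exact (hU₂W a (hT₂U h)).1
  have hNallC' : ∀ w ∈ N₁ ∪ N₂, w ∈ C' := by
    intro w hw
    by_cases hwC : w ∈ C
    · refine Finset.mem_union_left _ (Finset.mem_sdiff.mpr ⟨hwC, fun hT => ?_⟩)
      have hwW : w ∈ W := by
        rcases Finset.mem_union.mp hw with h | h
        · exact hN₁W w h
        · exact hN₂W w h
      exact hTnotW w hT hwW
    · exact Finset.mem_union_right _ (Finset.mem_sdiff.mpr ⟨hw, hwC⟩)
  have hC'VC : IsVC (restrict H (W ∪ U₁ ∪ U₂)) C' := by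
    have hcov : ∀ x y : Fin k, (restrict H (W ∪ U₁ ∪ U₂)).Adj x y → x ∈ C →
        x ∈ C' ∨ y ∈ C' := by
      intro x y hxy hxC
      by_cases hxT : x ∈ T₁ ∪ T₂
      · right
        have hxW : x ∉ W := hTnotW x hxT
        have hyW : y ∈ W := by
          rcases hW.1 hxy.1 with h | h
          · exact absurd h hxW
          · exact h
        have hyn : y ∈ nbrW H W x := mem_nbrW.mpr ⟨hyW, hxy.1⟩
        rcases Finset.mem_union.mp hxT with h | h
        · exact hNallC' y (Finset.mem_union_left _ (hN₁a x h hyn))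
        · exact hNallC' y (Finset.mem_union_right _ (hN₂a x h hyn))
      · exact Or.inl (Finset.mem_union_left _ (Finset.mem_sdiff.mpr ⟨hxC, hxT⟩))
    intro x y hxy
    rcases hC hxy with h | h
    · exact hcov x y hxy h
    · exact (hcov y x hxy.symm h).symm
  have hdisj : Disjoint (C \ (T₁ ∪ T₂)) ((N₁ ∪ N₂) \ C) := by
    rw [Finset.disjoint_left]
    intro x hx hx'
    exact (Finset.mem_sdiff.mp hx').2 (Finset.mem_sdiff.mp hx).1
  have hC'card : C'.card = (C \ (T₁ ∪ T₂)).card + ((N₁ ∪ N₂) \ C).card :=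
    Finset.card_union_of_disjoint hdisj
  have hsplit : (C ∩ (T₁ ∪ T₂)).card + (C \ (T₁ ∪ T₂)).card = C.card :=
    Finset.card_inter_add_card_sdiff C (T₁ ∪ T₂)
  have hTc : ((T₁ ∪ T₂) ∩ C).card = (C ∩ (T₁ ∪ T₂)).card := by
    rw [Finset.inter_comm]
  have hvcle : vc (restrict H (W ∪ U₁ ∪ U₂)) ≤ C'.card :=
    Nat.sInf_le ⟨C', hC'VC, rfl⟩
  omega

/-- Corollary `cor:vc-iff`: with `W` a minimum vertex cover of `H`, `U₁` a
maximal subset of `[k] ∖ W` matchable into `W`, and `U₂` a maximal subset of `[k] ∖ (W ∪ U₁)`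
matchable into `W`, every minimum vertex cover of `H[W ∪ U₁ ∪ U₂]` is a vertex cover of `H`. -/
theorem minVC_of_restriction_covers (k : ℕ) (H : SimpleGraph (Fin k)) (W U₁ U₂ : Finset (Fin k))
    (hW : IsMinVC H W)
    (hU₁ : MaximalMatched H W (Finset.univ \ W) U₁)
    (hU₂ : MaximalMatched H W (Finset.univ \ (W ∪ U₁)) U₂) :
    ∀ C : Finset (Fin k), IsVC (restrict H (W ∪ U₁ ∪ U₂)) C →
      C.card = vc (restrict H (W ∪ U₁ ∪ U₂)) → IsVC H C := by
  intro C hC hcard u v huv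
  by_contra hcon
  push_neg at hcon
  rcases hW.1 huv with h | h
  · exact key_contradiction H W U₁ U₂ hW hU₁ hU₂ C hC hcard v u huv.symm h hcon.2 hcon.1
  · exact key_contradiction H W U₁ U₂ hW hU₁ hU₂ C hC hcard u v huv h hcon.1 hcon.2

end CliqueSA
end

section
/- Let a, b, c, f ≥ 1 be integers with b > 12·ln(4a), and let γ be a real number with (3a·ln(4af)/c)^{1/2} < γ < 1. Let U be a finite set with |U| = a·b and let ℱ ⊆ 2^U be a family of subsets of U with |ℱ| = f, each member of which has size at least c. Then there is a partition U = U_1 ∪ ⋯ ∪ U_a into a parts such that (1) b/2 ≤ |U_i| ≤ 3b/2 for all 1 ≤ i ≤ a, and (2) for every set F ∈ ℱ and every 1 ≤ i ≤ a, (1 − γ)·|F|/a ≤ |F ∩ U_i| ≤ (1 + γ)·|F|/a. -/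
open Finset

set_option maxHeartbeats 1000000

namespace SplitSetAux

lemma log_one_add_ge (δ : ℝ) (h0 : 0 ≤ δ) (h1 : δ ≤ 1) : δ * Real.log 2 ≤ Real.log (1 + δ) := by
  have h2 : Real.exp (δ * Real.log 2) ≤ 1 + δ := by
    have := convexOn_exp.2 (Set.mem_univ (0:ℝ)) (Set.mem_univ (Real.log 2))
      (by linarith : (0:ℝ) ≤ 1 - δ) h0 (by ring)
    simp only [smul_eq_mul, mul_zero, zero_add, Real.exp_zero, Real.exp_log two_pos] at this
    linarith
  calc δ * Real.log 2 = Real.log (Real.exp (δ * Real.log 2)) := (Real.log_exp _).symm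
    _ ≤ Real.log (1 + δ) := Real.log_le_log (Real.exp_pos _) h2

lemma key_up (δ : ℝ) (h0 : 0 ≤ δ) (h1 : δ ≤ 1) :
    δ + δ^2/3 ≤ (1+δ) * Real.log (1+δ) := by
  set f : ℝ → ℝ := fun x => (1+x) * Real.log (1+x) - x - x^2/3 with hf
  have hderiv : ∀ x ∈ Set.Ioo (0:ℝ) 1, HasDerivAt f (Real.log (1+x) - 2*x/3) x := by
    intro x hx
    have hx0 : (0:ℝ) < 1 + x := by linarith [hx.1]
    have h1 : HasDerivAt (fun y : ℝ => 1 + y) 1 x := (hasDerivAt_id x).const_add 1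
    have hlog : HasDerivAt (fun y : ℝ => Real.log (1+y)) (1/(1+x)) x := by
      exact ((Real.hasDerivAt_log hx0.ne').comp x h1).congr_deriv (by simp)
    have hmul : HasDerivAt (fun y : ℝ => (1+y) * Real.log (1+y))
        (1 * Real.log (1+x) + (1+x) * (1/(1+x))) x := h1.mul hlog
    have hq : HasDerivAt (fun y : ℝ => y + y^2/3) (1 + 2*x/3) x := by
      have := ((hasDerivAt_pow 2 x).div_const 3).const_add x
      have h2 : HasDerivAt (fun y : ℝ => y^2/3) (2*x/3) x := by
        simpa using (hasDerivAt_pow 2 x).div_const 3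
      exact (hasDerivAt_id x).add h2
    have := hmul.sub hq
    convert this using 1
    · rfl
    · rfl
    · ext y; simp [hf]; ring
    · rw [one_div, mul_inv_cancel₀ hx0.ne']; ring
  have hmono : MonotoneOn f (Set.Icc (0:ℝ) 1) := by
    apply monotoneOn_of_deriv_nonneg (convex_Icc 0 1)
    · apply ContinuousOn.sub
      apply ContinuousOn.sub
      · exact (continuousOn_const.add continuousOn_id).mul
          ((continuousOn_const.add continuousOn_id).log (fun x hx => by
            have : (0:ℝ) ≤ x := hx.1; intro h; change (1:ℝ) + x = 0 at h; linarith [hx.1]))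
      · exact continuousOn_id
      · exact (continuousOn_id.pow 2).div_const 3
    · intro x hx
      rw [interior_Icc] at hx
      exact ((hderiv x hx).differentiableAt).differentiableWithinAt
    · intro x hx
      rw [interior_Icc] at hx
      rw [(hderiv x hx).deriv]
      have := log_one_add_ge x hx.1.le hx.2.le
      have hl2 : (0.6931471803 : ℝ) < Real.log 2 := Real.log_two_gt_d9
      nlinarith [hx.1.le]
  have h00 : f 0 = 0 := by simp [hf]
  have := hmono (Set.mem_Icc.mpr ⟨le_refl 0, zero_le_one⟩) (Set.mem_Icc.mpr ⟨h0, h1⟩) h0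
  rw [h00] at this
  simp only [hf] at this
  linarith

lemma key_low (δ : ℝ) (h0 : 0 ≤ δ) (h1 : δ < 1) :
    -δ + δ^2/2 ≤ (1-δ) * Real.log (1-δ) := by
  set g : ℝ → ℝ := fun x => (1-x) * Real.log (1-x) + x - x^2/2 with hg
  have hderiv : ∀ x ∈ Set.Ioo (0:ℝ) δ, HasDerivAt g (-Real.log (1-x) - x) x := by
    intro x hx
    have hx0 : (0:ℝ) < 1 - x := by linarith [hx.2]
    have h1' : HasDerivAt (fun y : ℝ => 1 - y) (-1) x := by
      exact (hasDerivAt_id x).const_sub 1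
    have hlog : HasDerivAt (fun y : ℝ => Real.log (1-y)) ((1/(1-x)) * (-1)) x := by
      have := (Real.hasDerivAt_log hx0.ne').comp x h1'
      exact this.congr_deriv (by rw [one_div])
    have hmul : HasDerivAt (fun y : ℝ => (1-y) * Real.log (1-y))
        ((-1) * Real.log (1-x) + (1-x) * ((1/(1-x)) * (-1))) x := h1'.mul hlog
    have hq : HasDerivAt (fun y : ℝ => y - y^2/2) (1 - 2*x/2) x := by
      have h2 : HasDerivAt (fun y : ℝ => y^2/2) (2*x/2) x := by
        simpa using (hasDerivAt_pow 2 x).div_const 2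
      exact (hasDerivAt_id x).sub h2
    have := hmul.add hq
    convert this using 1
    · rfl
    · rfl
    · ext y; simp [hg]; ring
    · rw [one_div, ← mul_assoc, mul_inv_cancel₀ hx0.ne']; ring
  have hmono : MonotoneOn g (Set.Icc (0:ℝ) δ) := by
    apply monotoneOn_of_deriv_nonneg (convex_Icc 0 δ)
    · apply ContinuousOn.sub
      apply ContinuousOn.add
      · exact (continuousOn_const.sub continuousOn_id).mul
          ((continuousOn_const.sub continuousOn_id).log (fun x hx => by
            intro h; change (1:ℝ) - x = 0 at h; have := hx.2; linarith))
      · exact continuousOn_id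
      · exact (continuousOn_id.pow 2).div_const 2
    · intro x hx
      rw [interior_Icc] at hx
      exact ((hderiv x hx).differentiableAt).differentiableWithinAt
    · intro x hx
      rw [interior_Icc] at hx
      rw [(hderiv x hx).deriv]
      have hx0 : (0:ℝ) < 1 - x := by linarith [hx.2]
      have := Real.log_le_sub_one_of_pos hx0
      linarith
  have h00 : g 0 = 0 := by simp [hg]
  have := hmono (Set.mem_Icc.mpr ⟨le_refl 0, h0⟩) (Set.mem_Icc.mpr ⟨h0, le_refl δ⟩) h0
  rw [h00] at this
  simp only [hg] at this
  linarith

variable {U : Type*} [Fintype U] [DecidableEq U]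

lemma mgf_eq (a : ℕ) (ha : 1 ≤ a) (S : Finset U) (i : Fin a) (r : ℝ) :
    ∑ ω : U → Fin a, r ^ (S.filter fun u => ω u = i).card
      = ((a:ℝ) - 1 + r) ^ S.card * (a:ℝ) ^ (Fintype.card U - S.card) := by
  have step1 : ∀ ω : U → Fin a, r ^ (S.filter fun u => ω u = i).card
      = ∏ u : U, (if u ∈ S ∧ ω u = i then r else (1:ℝ)) := by
    intro ω
    rw [Finset.prod_ite, Finset.prod_const, Finset.prod_const_one, mul_one]
    congr 2
    ext u; simp [Finset.mem_filter]
  simp_rw [step1]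
  have hpi := Finset.prod_univ_sum (fun _ : U => (Finset.univ : Finset (Fin a)))
    (fun u j => if u ∈ S ∧ j = i then r else (1:ℝ))
  rw [Fintype.piFinset_univ] at hpi
  rw [← hpi]
  have hu : ∀ u : U, (∑ j : Fin a, if u ∈ S ∧ j = i then r else (1:ℝ))
      = if u ∈ S then ((a:ℝ) - 1 + r) else (a:ℝ) := by
    intro u
    by_cases hS : u ∈ S
    · simp only [hS, true_and, if_true]
      have : ∀ j : Fin a, (if j = i then r else (1:ℝ)) = (if j = i then r - 1 else 0) + 1 := by
        intro j; split <;> ring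
      simp_rw [this]
      rw [Finset.sum_add_distrib, Finset.sum_ite_eq' Finset.univ i (fun _ => r - 1),
        Finset.sum_const, Finset.card_univ, Fintype.card_fin]
      simp
      ring
    · simp [hS, Finset.card_univ]
  simp_rw [hu]
  rw [Finset.prod_ite, Finset.prod_const, Finset.prod_const]
  have hfeq : (Finset.univ.filter fun u : U => u ∈ S) = S :=
    Finset.filter_mem_eq_inter.trans (by simp)
  congr 2
  · rw [hfeq]
  · rw [Finset.filter_not, Finset.card_sdiff_of_subset (Finset.filter_subset _ _), Finset.card_univ]
    congr 1
    rw [show (Finset.univ.filter (Membership.mem S)) = (Finset.univ.filter fun u : U => u ∈ S) from rfl, hfeq]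

lemma count_upper (a : ℕ) (ha : 1 ≤ a) (S : Finset U) (i : Fin a) (r t : ℝ) (hr : 1 ≤ r) :
    ((Finset.univ.filter fun ω : U → Fin a =>
        t ≤ (((S.filter fun u => ω u = i).card : ℕ) : ℝ)).card : ℝ) * r ^ t
      ≤ ((a:ℝ) - 1 + r) ^ S.card * (a:ℝ) ^ (Fintype.card U - S.card) := by
  have h0 : (0:ℝ) < r := lt_of_lt_of_le one_pos hr
  rw [← mgf_eq a ha S i r]
  calc ((Finset.univ.filter fun ω : U → Fin a =>
        t ≤ (((S.filter fun u => ω u = i).card : ℕ) : ℝ)).card : ℝ) * r ^ t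
      = ∑ _ω ∈ (Finset.univ.filter fun ω : U → Fin a =>
          t ≤ (((S.filter fun u => ω u = i).card : ℕ) : ℝ)), r ^ t := by
        rw [Finset.sum_const, nsmul_eq_mul]
    _ ≤ ∑ ω ∈ (Finset.univ.filter fun ω : U → Fin a =>
          t ≤ (((S.filter fun u => ω u = i).card : ℕ) : ℝ)),
          r ^ (S.filter fun u => ω u = i).card := by
        apply Finset.sum_le_sum
        intro ω hω
        have ht : t ≤ (((S.filter fun u => ω u = i).card : ℕ) : ℝ) := (Finset.mem_filter.mp hω).2
        calc r ^ t ≤ r ^ ((((S.filter fun u => ω u = i).card : ℕ)) : ℝ) :=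
              Real.rpow_le_rpow_of_exponent_le hr ht
          _ = r ^ (S.filter fun u => ω u = i).card := Real.rpow_natCast r _
    _ ≤ ∑ ω : U → Fin a, r ^ (S.filter fun u => ω u = i).card := by
        apply Finset.sum_le_sum_of_subset_of_nonneg (Finset.filter_subset _ _)
        intro ω _ _
        exact pow_nonneg h0.le _

lemma count_lower (a : ℕ) (ha : 1 ≤ a) (S : Finset U) (i : Fin a) (r t : ℝ)
    (hr0 : 0 < r) (hr1 : r ≤ 1) :
    ((Finset.univ.filter fun ω : U → Fin a =>
        (((S.filter fun u => ω u = i).card : ℕ) : ℝ) ≤ t).card : ℝ) * r ^ t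
      ≤ ((a:ℝ) - 1 + r) ^ S.card * (a:ℝ) ^ (Fintype.card U - S.card) := by
  rw [← mgf_eq a ha S i r]
  calc ((Finset.univ.filter fun ω : U → Fin a =>
        (((S.filter fun u => ω u = i).card : ℕ) : ℝ) ≤ t).card : ℝ) * r ^ t
      = ∑ _ω ∈ (Finset.univ.filter fun ω : U → Fin a =>
          (((S.filter fun u => ω u = i).card : ℕ) : ℝ) ≤ t), r ^ t := by
        rw [Finset.sum_const, nsmul_eq_mul]
    _ ≤ ∑ ω ∈ (Finset.univ.filter fun ω : U → Fin a =>
          (((S.filter fun u => ω u = i).card : ℕ) : ℝ) ≤ t),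
          r ^ (S.filter fun u => ω u = i).card := by
        apply Finset.sum_le_sum
        intro ω hω
        have ht : (((S.filter fun u => ω u = i).card : ℕ) : ℝ) ≤ t := (Finset.mem_filter.mp hω).2
        calc r ^ t ≤ r ^ ((((S.filter fun u => ω u = i).card : ℕ)) : ℝ) :=
              Real.rpow_le_rpow_of_exponent_ge hr0 hr1 ht
          _ = r ^ (S.filter fun u => ω u = i).card := Real.rpow_natCast r _
    _ ≤ ∑ ω : U → Fin a, r ^ (S.filter fun u => ω u = i).card := by
        apply Finset.sum_le_sum_of_subset_of_nonneg (Finset.filter_subset _ _)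
        intro ω _ _
        exact pow_nonneg hr0.le _


noncomputable def EvUp (a : ℕ) (S : Finset U) (i : Fin a) (t : ℝ) : Finset (U → Fin a) :=
  Finset.univ.filter fun ω => t ≤ (((S.filter fun u => ω u = i).card : ℕ) : ℝ)

noncomputable def EvLow (a : ℕ) (S : Finset U) (i : Fin a) (t : ℝ) : Finset (U → Fin a) :=
  Finset.univ.filter fun ω => (((S.filter fun u => ω u = i).card : ℕ) : ℝ) ≤ t

lemma mem_EvUp {a : ℕ} {S : Finset U} {i : Fin a} {t : ℝ} {ω : U → Fin a} :
    ω ∈ EvUp a S i t ↔ t ≤ (((S.filter fun u => ω u = i).card : ℕ) : ℝ) := by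
  simp [EvUp]

lemma mem_EvLow {a : ℕ} {S : Finset U} {i : Fin a} {t : ℝ} {ω : U → Fin a} :
    ω ∈ EvLow a S i t ↔ (((S.filter fun u => ω u = i).card : ℕ) : ℝ) ≤ t := by
  simp [EvLow]


lemma chernoff_upper (a : ℕ) (ha : 1 ≤ a) (S : Finset U) (i : Fin a) (δ : ℝ)
    (hδ0 : 0 < δ) (hδ1 : δ ≤ 1) :
    ((EvUp a S i ((1+δ) * S.card / a)).card : ℝ)
      ≤ Real.exp (-(δ^2 * S.card) / (3*a)) * (a:ℝ) ^ (Fintype.card U) := by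
  rw [EvUp]
  set A : ℝ := (a:ℝ) with hA
  have hA1 : (1:ℝ) ≤ A := by rw [hA]; exact_mod_cast ha
  have hA0 : (0:ℝ) < A := by linarith
  set n := S.card with hn
  set N := Fintype.card U with hN
  have hnN : n ≤ N := S.card_le_univ
  set r : ℝ := 1 + δ with hr
  set t : ℝ := (1+δ) * n / A with ht
  have hr1 : (1:ℝ) ≤ r := by simp [hr]; linarith
  have hr0 : (0:ℝ) < r := by linarith
  have hrt : (0:ℝ) < r ^ t := Real.rpow_pos_of_pos hr0 t
  have hcu := count_upper a ha S i r t hr1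
  set L : ℝ := Real.log (1+δ) with hL
  have unit : Real.log (A+δ) + δ^2/(3*A) ≤ Real.log A + L*(1+δ)/A := by
    have h1 : Real.log (A+δ) ≤ Real.log A + δ/A := by
      have hlog := Real.log_le_sub_one_of_pos (show (0:ℝ) < (A+δ)/A by positivity)
      rw [Real.log_div (by linarith) (by linarith)] at hlog
      have he : (A+δ)/A - 1 = δ/A := by rw [div_sub_one hA0.ne']; ring
      linarith [he ▸ hlog]
    have h2 : (δ + δ^2/3)/A ≤ ((1+δ)*L)/A := by
      gcongr
      exact key_up δ hδ0.le hδ1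
    have e1 : (δ + δ^2/3)/A = δ/A + δ^2/(3*A) := by ring
    have e2 : ((1+δ)*L)/A = L*(1+δ)/A := by ring
    rw [e1, e2] at h2
    linarith
  have expineq : (A+δ)^n ≤ Real.exp (-(δ^2 * n) / (3*A)) * A^n * r^t := by
    have hAδ : (0:ℝ) < A + δ := by linarith
    calc (A+δ)^n = Real.exp ((n:ℝ) * Real.log (A+δ)) := by
          rw [Real.exp_nat_mul, Real.exp_log hAδ]
      _ ≤ Real.exp ((n:ℝ) * (Real.log A + L*(1+δ)/A - δ^2/(3*A))) := by
          apply Real.exp_le_exp.mpr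
          apply mul_le_mul_of_nonneg_left _ (Nat.cast_nonneg n)
          linarith
      _ = Real.exp (-(δ^2 * n) / (3*A)) * A^n * r^t := by
          rw [Real.rpow_def_of_pos hr0]
          rw [show A^n = Real.exp ((n:ℝ) * Real.log A) by rw [Real.exp_nat_mul, Real.exp_log hA0]]
          rw [← Real.exp_add, ← Real.exp_add]
          congr 1
          have : Real.log r = L := by rw [hr, hL]
          rw [this, ht]
          field_simp
          ring
  have key : ((A:ℝ) - 1 + r) ^ n * A ^ (N - n)
      ≤ Real.exp (-(δ^2 * n) / (3*A)) * A^N * r^t := by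
    have hAr : A - 1 + r = A + δ := by rw [hr]; ring
    rw [hAr]
    calc (A+δ)^n * A^(N-n) ≤ (Real.exp (-(δ^2 * n) / (3*A)) * A^n * r^t) * A^(N-n) := by
          apply mul_le_mul_of_nonneg_right expineq (pow_nonneg hA0.le _)
      _ = Real.exp (-(δ^2 * n) / (3*A)) * (A^n * A^(N-n)) * r^t := by ring
      _ = Real.exp (-(δ^2 * n) / (3*A)) * A^N * r^t := by
          rw [← pow_add, Nat.add_sub_cancel' hnN]
  rw [← mul_le_mul_iff_left₀ hrt]
  calc _ ≤ ((A:ℝ) - 1 + r) ^ n * A ^ (N - n) := hcu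
    _ ≤ Real.exp (-(δ^2 * n) / (3*A)) * A^N * r^t := key
    _ = Real.exp (-(δ^2 * S.card) / (3*a)) * (a:ℝ) ^ (Fintype.card U) * r^t := rfl

lemma chernoff_lower (a : ℕ) (ha : 1 ≤ a) (S : Finset U) (i : Fin a) (δ : ℝ)
    (hδ0 : 0 < δ) (hδ1 : δ < 1) :
    ((EvLow a S i ((1-δ) * S.card / a)).card : ℝ)
      ≤ Real.exp (-(δ^2 * S.card) / (2*a)) * (a:ℝ) ^ (Fintype.card U) := by
  rw [EvLow]
  set A : ℝ := (a:ℝ) with hA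
  have hA1 : (1:ℝ) ≤ A := by rw [hA]; exact_mod_cast ha
  have hA0 : (0:ℝ) < A := by linarith
  set n := S.card with hn
  set N := Fintype.card U with hN
  have hnN : n ≤ N := S.card_le_univ
  set r : ℝ := 1 - δ with hr
  set t : ℝ := (1-δ) * n / A with ht
  have hr0 : (0:ℝ) < r := by simp [hr]; linarith
  have hr1 : r ≤ 1 := by simp [hr]; linarith
  have hrt : (0:ℝ) < r ^ t := Real.rpow_pos_of_pos hr0 t
  have hcl := count_lower a ha S i r t hr0 hr1
  set L : ℝ := Real.log (1-δ) with hL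
  have unit : Real.log (A-δ) + δ^2/(2*A) ≤ Real.log A + L*(1-δ)/A := by
    have hAδ : (0:ℝ) < A - δ := by linarith
    have h1 : Real.log (A-δ) ≤ Real.log A - δ/A := by
      have hlog := Real.log_le_sub_one_of_pos (show (0:ℝ) < (A-δ)/A by positivity)
      rw [Real.log_div (by linarith) (by linarith)] at hlog
      have he : (A-δ)/A - 1 = -(δ/A) := by rw [div_sub_one hA0.ne']; ring
      linarith [he ▸ hlog]
    have h2 : (-δ + δ^2/2)/A ≤ ((1-δ)*L)/A := by
      gcongr
      · exact key_low δ hδ0.le hδ1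
    have e1 : (-δ + δ^2/2)/A = -(δ/A) + δ^2/(2*A) := by ring
    have e2 : ((1-δ)*L)/A = L*(1-δ)/A := by ring
    rw [e1, e2] at h2
    linarith
  have expineq : (A-δ)^n ≤ Real.exp (-(δ^2 * n) / (2*A)) * A^n * r^t := by
    have hAδ : (0:ℝ) < A - δ := by linarith
    calc (A-δ)^n = Real.exp ((n:ℝ) * Real.log (A-δ)) := by
          rw [Real.exp_nat_mul, Real.exp_log hAδ]
      _ ≤ Real.exp ((n:ℝ) * (Real.log A + L*(1-δ)/A - δ^2/(2*A))) := by
          apply Real.exp_le_exp.mpr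
          apply mul_le_mul_of_nonneg_left _ (Nat.cast_nonneg n)
          linarith
      _ = Real.exp (-(δ^2 * n) / (2*A)) * A^n * r^t := by
          rw [Real.rpow_def_of_pos hr0]
          rw [show A^n = Real.exp ((n:ℝ) * Real.log A) by rw [Real.exp_nat_mul, Real.exp_log hA0]]
          rw [← Real.exp_add, ← Real.exp_add]
          congr 1
          have : Real.log r = L := by rw [hr, hL]
          rw [this, ht]
          field_simp
          ring
  have key : ((A:ℝ) - 1 + r) ^ n * A ^ (N - n)
      ≤ Real.exp (-(δ^2 * n) / (2*A)) * A^N * r^t := by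
    have hAr : A - 1 + r = A - δ := by rw [hr]; ring
    rw [hAr]
    calc (A-δ)^n * A^(N-n) ≤ (Real.exp (-(δ^2 * n) / (2*A)) * A^n * r^t) * A^(N-n) := by
          apply mul_le_mul_of_nonneg_right expineq (pow_nonneg hA0.le _)
      _ = Real.exp (-(δ^2 * n) / (2*A)) * (A^n * A^(N-n)) * r^t := by ring
      _ = Real.exp (-(δ^2 * n) / (2*A)) * A^N * r^t := by
          rw [← pow_add, Nat.add_sub_cancel' hnN]
  rw [← mul_le_mul_iff_left₀ hrt]
  calc _ ≤ ((A:ℝ) - 1 + r) ^ n * A ^ (N - n) := hcl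
    _ ≤ Real.exp (-(δ^2 * n) / (2*A)) * A^N * r^t := key
    _ = Real.exp (-(δ^2 * S.card) / (2*a)) * (a:ℝ) ^ (Fintype.card U) * r^t := rfl

end SplitSetAux

open SplitSetAux

/-- Lemma `lem:split-set`: let `a,b,c,f ≥ 1` be integers with
`b > 12 ln(4a)`, and `γ ∈ ((3a·ln(4af)/c)^{1/2}, 1)`. If `U` is a set of size `a·b` and
`ℱ` is a family of `f` subsets of `U`, each of size at least `c`, then `U` can be partitioned
into parts `U_1, …, U_a` with `b/2 ≤ |U_i| ≤ 3b/2` and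
`(1-γ)|F|/a ≤ |F ∩ U_i| ≤ (1+γ)|F|/a` for all `F ∈ ℱ` and all `i`. -/
theorem split_set_partition (U : Type*) [Fintype U] [DecidableEq U]
    (a b c f : ℕ) (ha : 1 ≤ a) (hb1 : 1 ≤ b) (hc : 1 ≤ c) (hf : 1 ≤ f)
    (hb : 12 * Real.log (4 * a) < (b : ℝ))
    (γ : ℝ) (hγl : Real.sqrt (3 * a * Real.log (4 * a * f) / c) < γ) (hγu : γ < 1)
    (hU : Fintype.card U = a * b)
    (ℱ : Finset (Finset U)) (hF : ℱ.card = f) (hFc : ∀ F ∈ ℱ, c ≤ F.card) :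
    ∃ P : Fin a → Finset U,
      (∀ i j, i ≠ j → Disjoint (P i) (P j)) ∧
      (Finset.univ.biUnion P = Finset.univ) ∧
      (∀ i, (b : ℝ) / 2 ≤ ((P i).card : ℝ) ∧ ((P i).card : ℝ) ≤ 3 * (b : ℝ) / 2) ∧
      (∀ F ∈ ℱ, ∀ i,
        (1 - γ) * (F.card : ℝ) / a ≤ ((F ∩ P i).card : ℝ) ∧
        ((F ∩ P i).card : ℝ) ≤ (1 + γ) * (F.card : ℝ) / a) := by
  have ha0 : (0:ℝ) < (a:ℝ) := by exact_mod_cast ha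
  have ha1 : (1:ℝ) ≤ (a:ℝ) := Nat.one_le_cast.mpr ha
  have hf0 : (0:ℝ) < (f:ℝ) := by exact_mod_cast hf
  have hf1 : (1:ℝ) ≤ (f:ℝ) := Nat.one_le_cast.mpr hf
  have hc0 : (0:ℝ) < (c:ℝ) := by exact_mod_cast hc
  have hb0 : (0:ℝ) ≤ (b:ℝ) := Nat.cast_nonneg b
  have hγ0 : 0 < γ := lt_of_le_of_lt (Real.sqrt_nonneg _) hγl
  have hcardU : (((Finset.univ : Finset U).card : ℕ) : ℝ) = (a:ℝ) * b := by
    rw [Finset.card_univ, hU]; push_cast; ring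
  have haN : (0:ℝ) < (a:ℝ) ^ (Fintype.card U) := pow_pos ha0 _
  -- exponential bounds
  have hbd1 : Real.exp (-(b:ℝ)/12) < ((4:ℝ)*a)⁻¹ := by
    have h4a : (0:ℝ) < 4*a := by linarith
    rw [show ((4:ℝ)*a)⁻¹ = Real.exp (-Real.log (4*a)) by rw [Real.exp_neg, Real.exp_log h4a]]
    exact Real.exp_lt_exp.mpr (by linarith)
  have hbdF : Real.exp (-(γ^2*(c:ℝ))/(3*a)) < ((4:ℝ)*a*f)⁻¹ := by
    have h4af : (0:ℝ) < 4*a*f := by positivity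
    have hlog0 : 0 ≤ Real.log (4*a*f) := Real.log_nonneg (by nlinarith)
    have hx0 : 0 ≤ 3*(a:ℝ)*Real.log (4*a*f)/c := by positivity
    have hγ2 : 3*(a:ℝ)*Real.log (4*a*f)/c < γ^2 := by
      have := Real.sq_sqrt hx0
      nlinarith [Real.sqrt_nonneg (3*(a:ℝ)*Real.log (4*a*f)/c)]
    have hkey : Real.log (4*a*f) < γ^2*(c:ℝ)/(3*a) := by
      rw [div_lt_iff₀ hc0] at hγ2
      rw [lt_div_iff₀ (by linarith : (0:ℝ) < 3*a)]
      nlinarith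
    rw [show ((4:ℝ)*a*f)⁻¹ = Real.exp (-Real.log (4*a*f)) by rw [Real.exp_neg, Real.exp_log h4af]]
    exact Real.exp_lt_exp.mpr (by rw [neg_div, neg_lt_neg_iff]; exact hkey)
  -- event bounds
  have hEUpB : ∀ i : Fin a,
      ((EvUp a (Finset.univ : Finset U) i (3*(b:ℝ)/2)).card : ℝ)
        < ((4:ℝ)*a)⁻¹ * (a:ℝ)^(Fintype.card U) := by
    intro i
    have h := chernoff_upper a ha (Finset.univ : Finset U) i (1/2) (by norm_num) (by norm_num)
    rw [show (1+(1/2:ℝ)) * ((Finset.univ : Finset U).card) / a = 3*(b:ℝ)/2 by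
      rw [hcardU]; field_simp; ring] at h
    rw [show -((1/2:ℝ)^2 * ((Finset.univ : Finset U).card)) / (3*a) = -(b:ℝ)/12 by
      rw [hcardU]; field_simp; ring] at h
    exact h.trans_lt (mul_lt_mul_of_pos_right hbd1 haN)
  have hELowB : ∀ i : Fin a,
      ((EvLow a (Finset.univ : Finset U) i ((b:ℝ)/2)).card : ℝ)
        < ((4:ℝ)*a)⁻¹ * (a:ℝ)^(Fintype.card U) := by
    intro i
    have h := chernoff_lower a ha (Finset.univ : Finset U) i (1/2) (by norm_num) (by norm_num)
    rw [show (1-(1/2:ℝ)) * ((Finset.univ : Finset U).card) / a = (b:ℝ)/2 by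
      rw [hcardU]; field_simp; ring] at h
    rw [show -((1/2:ℝ)^2 * ((Finset.univ : Finset U).card)) / (2*a) = -(b:ℝ)/8 by
      rw [hcardU]; field_simp; ring] at h
    refine lt_of_le_of_lt (h.trans ?_) (mul_lt_mul_of_pos_right hbd1 haN)
    apply mul_le_mul_of_nonneg_right _ haN.le
    exact Real.exp_le_exp.mpr (by rw [neg_div, neg_div, neg_le_neg_iff]; linarith)
  have hFUpB : ∀ F ∈ ℱ, ∀ i : Fin a,
      ((EvUp a F i ((1+γ) * (F.card : ℝ) / a)).card : ℝ)
        < ((4:ℝ)*a*f)⁻¹ * (a:ℝ)^(Fintype.card U) := by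
    intro F hFm i
    have h := chernoff_upper a ha F i γ hγ0 hγu.le
    refine lt_of_le_of_lt (h.trans ?_) (mul_lt_mul_of_pos_right hbdF haN)
    apply mul_le_mul_of_nonneg_right _ haN.le
    apply Real.exp_le_exp.mpr
    rw [neg_div, neg_div, neg_le_neg_iff]
    have hcF : (c:ℝ) ≤ F.card := by exact_mod_cast hFc F hFm
    rw [div_le_div_iff₀ (by positivity) (by positivity)]
    nlinarith [mul_le_mul_of_nonneg_left hcF (sq_nonneg γ), ha0]
  have hFLowB : ∀ F ∈ ℱ, ∀ i : Fin a,
      ((EvLow a F i ((1-γ) * (F.card : ℝ) / a)).card : ℝ)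
        < ((4:ℝ)*a*f)⁻¹ * (a:ℝ)^(Fintype.card U) := by
    intro F hFm i
    have h := chernoff_lower a ha F i γ hγ0 hγu
    refine lt_of_le_of_lt (h.trans ?_) (mul_lt_mul_of_pos_right hbdF haN)
    apply mul_le_mul_of_nonneg_right _ haN.le
    apply Real.exp_le_exp.mpr
    rw [neg_div, neg_div, neg_le_neg_iff]
    have hcF : (c:ℝ) ≤ F.card := by exact_mod_cast hFc F hFm
    rw [div_le_div_iff₀ (by positivity) (by positivity)]
    nlinarith [mul_le_mul_of_nonneg_left hcF (sq_nonneg γ),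
      mul_le_mul_of_nonneg_left (by linarith : 2*(a:ℝ) ≤ 3*a)
        (by positivity : (0:ℝ) ≤ γ^2*(F.card:ℝ)), ha0]
  -- counting argument
  haveI : Nonempty (Fin a) := ⟨⟨0, ha⟩⟩
  have hΩcard : (((Finset.univ : Finset (U → Fin a)).card : ℕ) : ℝ) = (a:ℝ) ^ (Fintype.card U) := by
    rw [Finset.card_univ, Fintype.card_fun, Fintype.card_fin]
    push_cast; ring
  have hexists : ∃ ω : U → Fin a,
      (∀ i : Fin a, (b:ℝ)/2 ≤ (((Finset.univ.filter fun u : U => ω u = i).card : ℕ) : ℝ) ∧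
        (((Finset.univ.filter fun u : U => ω u = i).card : ℕ) : ℝ) ≤ 3*(b:ℝ)/2) ∧
      (∀ F ∈ ℱ, ∀ i : Fin a,
        (1-γ) * (F.card : ℝ) / a ≤ (((F.filter fun u => ω u = i).card : ℕ) : ℝ) ∧
        (((F.filter fun u => ω u = i).card : ℕ) : ℝ) ≤ (1+γ) * (F.card : ℝ) / a) := by
    by_contra hno
    push_neg at hno
    have cover : (Finset.univ : Finset (U → Fin a)) ⊆
        (Finset.univ.biUnion fun i : Fin a =>
          EvUp a (Finset.univ : Finset U) i (3*(b:ℝ)/2) ∪ EvLow a (Finset.univ : Finset U) i ((b:ℝ)/2))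
        ∪ ℱ.biUnion (fun F => Finset.univ.biUnion fun i : Fin a =>
          EvUp a F i ((1+γ) * (F.card : ℝ) / a) ∪ EvLow a F i ((1-γ) * (F.card : ℝ) / a)) := by
      intro ω _
      by_cases hA : ∀ i : Fin a, (b:ℝ)/2 ≤ (((Finset.univ.filter fun u : U => ω u = i).card : ℕ) : ℝ) ∧
          (((Finset.univ.filter fun u : U => ω u = i).card : ℕ) : ℝ) ≤ 3*(b:ℝ)/2
      case neg =>
        obtain ⟨i, hi⟩ := not_forall.mp hA
        apply Finset.mem_union_left
        apply Finset.mem_biUnion.mpr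
        refine ⟨i, Finset.mem_univ i, ?_⟩
        rcases not_and_or.mp hi with h' | h'
        · exact Finset.mem_union_right _ (mem_EvLow.mpr (not_le.mp h').le)
        · exact Finset.mem_union_left _ (mem_EvUp.mpr (not_le.mp h').le)
      case pos =>
        obtain ⟨F, hFm, i, hi⟩ := hno ω hA
        apply Finset.mem_union_right
        apply Finset.mem_biUnion.mpr
        refine ⟨F, hFm, Finset.mem_biUnion.mpr ⟨i, Finset.mem_univ i, ?_⟩⟩
        by_cases hl : (1-γ) * (F.card : ℝ) / a ≤ (((F.filter fun u => ω u = i).card : ℕ) : ℝ)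
        · exact Finset.mem_union_left _ (mem_EvUp.mpr (hi hl).le)
        · exact Finset.mem_union_right _ (mem_EvLow.mpr (not_le.mp hl).le)
    have hnat : (Finset.univ : Finset (U → Fin a)).card ≤
        (∑ i : Fin a, ((EvUp a (Finset.univ : Finset U) i (3*(b:ℝ)/2)).card
          + (EvLow a (Finset.univ : Finset U) i ((b:ℝ)/2)).card))
        + ∑ F ∈ ℱ, ∑ i : Fin a, ((EvUp a F i ((1+γ) * (F.card : ℝ) / a)).card
          + (EvLow a F i ((1-γ) * (F.card : ℝ) / a)).card) := by
      calc (Finset.univ : Finset (U → Fin a)).card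
          ≤ _ := Finset.card_le_card cover
        _ ≤ _ + _ := Finset.card_union_le _ _
        _ ≤ _ := by
            apply add_le_add
            · exact Finset.card_biUnion_le.trans
                (Finset.sum_le_sum fun i _ => Finset.card_union_le _ _)
            · exact Finset.card_biUnion_le.trans
                (Finset.sum_le_sum fun F _ => Finset.card_biUnion_le.trans
                  (Finset.sum_le_sum fun i _ => Finset.card_union_le _ _))
    have hreal : ((a:ℝ) ^ (Fintype.card U)) ≤
        (∑ i : Fin a, (((EvUp a (Finset.univ : Finset U) i (3*(b:ℝ)/2)).card : ℝ)
          + ((EvLow a (Finset.univ : Finset U) i ((b:ℝ)/2)).card : ℝ)))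
        + ∑ F ∈ ℱ, ∑ i : Fin a, (((EvUp a F i ((1+γ) * (F.card : ℝ) / a)).card : ℝ)
          + ((EvLow a F i ((1-γ) * (F.card : ℝ) / a)).card : ℝ)) := by
      rw [← hΩcard]
      exact_mod_cast hnat
    have hs1 : (∑ i : Fin a, (((EvUp a (Finset.univ : Finset U) i (3*(b:ℝ)/2)).card : ℝ)
          + ((EvLow a (Finset.univ : Finset U) i ((b:ℝ)/2)).card : ℝ)))
        < (a:ℝ) ^ (Fintype.card U) / 2 := by
      calc _ < ∑ _i : Fin a, (((4:ℝ)*a)⁻¹ * (a:ℝ)^(Fintype.card U)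
              + ((4:ℝ)*a)⁻¹ * (a:ℝ)^(Fintype.card U)) := by
            apply Finset.sum_lt_sum_of_nonempty Finset.univ_nonempty
            intro i _
            exact add_lt_add (hEUpB i) (hELowB i)
        _ = (a:ℝ) ^ (Fintype.card U) / 2 := by
            rw [Finset.sum_const, Finset.card_univ, Fintype.card_fin, nsmul_eq_mul]
            field_simp
            ring
    have hs2 : (∑ F ∈ ℱ, ∑ i : Fin a, (((EvUp a F i ((1+γ) * (F.card : ℝ) / a)).card : ℝ)
          + ((EvLow a F i ((1-γ) * (F.card : ℝ) / a)).card : ℝ)))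
        < (a:ℝ) ^ (Fintype.card U) / 2 := by
      have hFne : ℱ.Nonempty := Finset.card_pos.mp (by omega)
      calc _ < ∑ _F ∈ ℱ, (a:ℝ) ^ (Fintype.card U) / (2*f) := by
            apply Finset.sum_lt_sum_of_nonempty hFne
            intro F hFm
            calc _ < ∑ _i : Fin a, (((4:ℝ)*a*f)⁻¹ * (a:ℝ)^(Fintype.card U)
                    + ((4:ℝ)*a*f)⁻¹ * (a:ℝ)^(Fintype.card U)) := by
                  apply Finset.sum_lt_sum_of_nonempty Finset.univ_nonempty
                  intro i _
                  exact add_lt_add (hFUpB F hFm i) (hFLowB F hFm i)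
              _ = (a:ℝ) ^ (Fintype.card U) / (2*f) := by
                  rw [Finset.sum_const, Finset.card_univ, Fintype.card_fin, nsmul_eq_mul]
                  field_simp
                  ring
        _ = (a:ℝ) ^ (Fintype.card U) / 2 := by
            rw [Finset.sum_const, hF, nsmul_eq_mul]
            field_simp
    linarith
  obtain ⟨ω, hω1, hω2⟩ := hexists
  refine ⟨fun i => Finset.univ.filter fun u : U => ω u = i, ?_, ?_, ?_, ?_⟩
  · intro i j hij
    apply Finset.disjoint_left.mpr
    intro u hu hu'
    exact hij ((Finset.mem_filter.mp hu).2 ▸ (Finset.mem_filter.mp hu').2 ▸ rfl)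
  · ext u
    simp only [Finset.mem_biUnion, Finset.mem_univ, Finset.mem_filter, true_and, iff_true]
    exact ⟨ω u, rfl⟩
  · exact hω1
  · intro F hFm i
    have h := hω2 F hFm i
    have heq : F ∩ (Finset.univ.filter fun u : U => ω u = i) = F.filter fun u => ω u = i := by
      ext u
      simp [Finset.mem_inter, Finset.mem_filter]
    rw [heq]
    exact h
end
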